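/- arXiv:2510.04501 — 8 statements merged into one kernel-verified Lean document; each statement's English description precedes it below -/
import Mathlib

section
/- Let a, b, c, d > 0 satisfy the strict weak competition condition b < a < 1/c and let s ∈ ℝ be arbitrary. If (u, v) is a pair of twice continuously differentiable functions solving u'' − s·u' + u·(1 − u − c·v) = 0 and d·v'' − s·v' + v·(a − b·u − v) = 0 on ℝ and satisfying 0 < u(ξ) < u* and 0 < v(ξ) < v* for all ξ ∈ ℝ, then u and v are each monotone on ℝ (each is either nondecreasing on all of ℝ or nonincreasing on all of ℝ). -/
open Filter Real

lemma key_mono (σ : ℝ) (u : ℝ → ℝ) (hu : ContDiff ℝ 2 u)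
    (hpos : ∀ ξ, 0 < u ξ)
    (hineq : ∀ ξ, deriv (deriv u) ξ - σ * deriv u ξ < 0) :
    Monotone u ∨ Antitone u := by
  have hu1 : Differentiable ℝ u := hu.differentiable (by norm_num)
  have hu2 : Differentiable ℝ (deriv u) := by
    have h := (contDiff_succ_iff_deriv.mp (by exact_mod_cast hu : ContDiff ℝ (1+1) u)).2
    exact h.2.differentiable (by norm_num)
  set g : ℝ → ℝ := fun ξ => Real.exp (-σ * ξ) * deriv u ξ with hg
  have hgd : ∀ ξ, HasDerivAt g (Real.exp (-σ*ξ) * (deriv (deriv u) ξ - σ * deriv u ξ)) ξ := by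
    intro ξ
    have h0 : HasDerivAt (fun y : ℝ => -σ*y) (-σ) ξ := by
      simpa using (hasDerivAt_id ξ).const_mul (-σ)
    have h1 : HasDerivAt (fun ξ : ℝ => Real.exp (-σ*ξ)) (Real.exp (-σ*ξ) * (-σ)) ξ := h0.exp
    have h2 : HasDerivAt (deriv u) (deriv (deriv u) ξ) ξ := (hu2 ξ).hasDerivAt
    have := h1.mul h2
    refine HasDerivAt.congr_deriv this ?_
    ring
  have hganti : StrictAnti g := by
    apply strictAnti_of_deriv_neg
    intro ξ
    rw [(hgd ξ).deriv]
    exact mul_neg_of_pos_of_neg (Real.exp_pos _) (hineq ξ)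
  have hueq : ∀ ξ, deriv u ξ = Real.exp (σ*ξ) * g ξ := by
    intro ξ
    simp only [hg]
    rw [← mul_assoc, ← Real.exp_add]
    ring_nf
    simp
  rcases le_or_gt 0 σ with hσ | hσ
  · -- σ ≥ 0 : nondecreasing
    left
    apply monotone_of_deriv_nonneg hu1
    intro ξ0
    by_contra hneg
    push_neg at hneg
    have hC : deriv u ξ0 < 0 := hneg
    -- on [ξ0, ∞), deriv u ≤ deriv u ξ0
    have hbound : ∀ ξ ∈ Set.Ici ξ0, deriv u ξ ≤ deriv u ξ0 := by
      intro ξ hξ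
      rw [hueq ξ, hueq ξ0]
      have hgle : g ξ ≤ g ξ0 := hganti.antitone hξ
      have hg0 : g ξ0 < 0 := by
        have := Real.exp_pos (-σ*ξ0)
        nlinarith [hueq ξ0, Real.exp_pos (σ*ξ0)]
      have he : Real.exp (σ*ξ0) ≤ Real.exp (σ*ξ) := by
        apply Real.exp_le_exp.mpr
        exact mul_le_mul_of_nonneg_left hξ hσ
      nlinarith [Real.exp_pos (σ*ξ), Real.exp_pos (σ*ξ0), hgle.trans_lt hg0]
    -- then u decreases linearly
    set C := deriv u ξ0 with hCdef
    have hlin : ∀ ξ ∈ Set.Ici ξ0, u ξ ≤ u ξ0 + C * (ξ - ξ0) := by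
      intro ξ hξ
      have hφ : AntitoneOn (fun t => u t - C * t) (Set.Ici ξ0) := by
        apply antitoneOn_of_deriv_nonpos (convex_Ici ξ0)
        · exact (hu1.continuous.sub (continuous_const.mul continuous_id)).continuousOn
        · intro t ht
          exact ((hu1 t).sub (by fun_prop)).differentiableWithinAt
        · intro t ht
          rw [interior_Ici] at ht
          have hder : HasDerivAt (fun t => u t - C * t) (deriv u t - C) t :=
            (hu1 t).hasDerivAt.sub (by simpa using (hasDerivAt_id t).const_mul C)
          rw [hder.deriv]
          have := hbound t (Set.mem_Ici.mpr (le_of_lt ht))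
          linarith
      have := hφ (Set.mem_Ici.mpr le_rfl) hξ hξ
      dsimp only at this
      linarith
    have hξ1 : ξ0 ≤ ξ0 + u ξ0 / (-C) + 1 := by
      have : 0 < u ξ0 / (-C) := div_pos (hpos ξ0) (by linarith)
      linarith
    have := hlin _ hξ1
    have hval : u ξ0 + C * ((ξ0 + u ξ0 / (-C) + 1) - ξ0) = C := by
      have hC0 : C ≠ 0 := ne_of_lt hC
      field_simp [hC0]
      ring
    rw [hval] at this
    exact absurd (hpos _) (not_lt.mpr (this.trans (le_of_lt hC)))
  · -- σ < 0 : nonincreasing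
    right
    apply antitone_of_deriv_nonpos hu1
    intro ξ0
    by_contra hposd
    push_neg at hposd
    have hC : 0 < deriv u ξ0 := hposd
    have hbound : ∀ ξ ∈ Set.Iic ξ0, deriv u ξ0 ≤ deriv u ξ := by
      intro ξ hξ
      rw [hueq ξ, hueq ξ0]
      have hgle : g ξ0 ≤ g ξ := hganti.antitone hξ
      have hg0 : 0 < g ξ0 := by
        nlinarith [hueq ξ0, Real.exp_pos (σ*ξ0), Real.exp_pos (-σ*ξ0)]
      have he : Real.exp (σ*ξ0) ≤ Real.exp (σ*ξ) := by
        apply Real.exp_le_exp.mpr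
        exact mul_le_mul_of_nonpos_left hξ hσ.le
      nlinarith [Real.exp_pos (σ*ξ), Real.exp_pos (σ*ξ0), lt_of_lt_of_le hg0 hgle]
    set C := deriv u ξ0 with hCdef
    have hlin : ∀ ξ ∈ Set.Iic ξ0, u ξ ≤ u ξ0 + C * (ξ - ξ0) := by
      intro ξ hξ
      have hφ : MonotoneOn (fun t => u t - C * t) (Set.Iic ξ0) := by
        apply monotoneOn_of_deriv_nonneg (convex_Iic ξ0)
        · exact (hu1.continuous.sub (continuous_const.mul continuous_id)).continuousOn
        · intro t ht
          exact ((hu1 t).sub (by fun_prop)).differentiableWithinAt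
        · intro t ht
          rw [interior_Iic] at ht
          have hder : HasDerivAt (fun t => u t - C * t) (deriv u t - C) t :=
            (hu1 t).hasDerivAt.sub (by simpa using (hasDerivAt_id t).const_mul C)
          rw [hder.deriv]
          have := hbound t (Set.mem_Iio.mp ht).le
          linarith
      have := hφ hξ (Set.mem_Iic.mpr le_rfl) hξ
      dsimp only at this
      linarith
    have hξ1 : ξ0 - u ξ0 / C - 1 ≤ ξ0 := by
      have : 0 < u ξ0 / C := div_pos (hpos ξ0) hC
      linarith
    have := hlin _ hξ1
    have hval : u ξ0 + C * ((ξ0 - u ξ0 / C - 1) - ξ0) = -C := by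
      have hC0 : C ≠ 0 := ne_of_gt hC
      field_simp [hC0]
      ring
    rw [hval] at this
    have := hpos (ξ0 - u ξ0 / C - 1)
    linarith

/-- If a positive solution of the traveling-wave system stays strictly between
`0` and the coexistence equilibrium `(u*, v*)`, then both components are monotone. -/
theorem monotone_of_range_in_box
    (a b c d : ℝ) (ha : 0 < a) (hb : 0 < b) (hc : 0 < c) (hd : 0 < d)
    (hba : b < a) (hac : a < 1 / c) (s : ℝ)
    (u v : ℝ → ℝ) (hu : ContDiff ℝ 2 u) (hv : ContDiff ℝ 2 v)
    (hueq : ∀ ξ : ℝ, deriv (deriv u) ξ - s * deriv u ξ + u ξ * (1 - u ξ - c * v ξ) = 0)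
    (hveq : ∀ ξ : ℝ, d * deriv (deriv v) ξ - s * deriv v ξ + v ξ * (a - b * u ξ - v ξ) = 0)
    (hub : ∀ ξ : ℝ, 0 < u ξ ∧ u ξ < (1 - a * c) / (1 - b * c))
    (hvb : ∀ ξ : ℝ, 0 < v ξ ∧ v ξ < (a - b) / (1 - b * c)) :
    (Monotone u ∨ Antitone u) ∧ (Monotone v ∨ Antitone v) := by
  have hac' : a * c < 1 := by
    calc a * c < (1/c) * c := by nlinarith
    _ = 1 := by field_simp
  have hbc : b * c < 1 := by nlinarith
  have hbc0 : (1 : ℝ) - b * c ≠ 0 := by linarith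
  -- key positivity facts
  have huf : ∀ ξ, 0 < 1 - u ξ - c * v ξ := by
    intro ξ
    have h1 := (hub ξ).2
    have h2 := (hvb ξ).2
    have hid : (1 - a*c)/(1 - b*c) + c*((a - b)/(1 - b*c)) = 1 := by
      field_simp
      rw [div_eq_one_iff_eq (by linarith)]
      ring
    nlinarith [h2, hc]
  have hvf : ∀ ξ, 0 < a - b * u ξ - v ξ := by
    intro ξ
    have h1 := (hub ξ).2
    have h2 := (hvb ξ).2
    have hid : b*((1 - a*c)/(1 - b*c)) + (a - b)/(1 - b*c) = a := by
      field_simp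
      ring
    nlinarith [h1, hb]
  constructor
  · apply key_mono s u hu (fun ξ => (hub ξ).1)
    intro ξ
    have h := hueq ξ
    have := mul_pos (hub ξ).1 (huf ξ)
    linarith
  · apply key_mono (s/d) v hv (fun ξ => (hvb ξ).1)
    intro ξ
    have h := hveq ξ
    have hp := mul_pos (hvb ξ).1 (hvf ξ)
    have : deriv (deriv v) ξ - s/d * deriv v ξ = -(v ξ * (a - b * u ξ - v ξ)) / d := by
      field_simp
      linarith
    rw [this]
    exact div_neg_of_neg_of_pos (by linarith) hd
end

section
/- Assume a, b, c, d > 0 with b < a ≤ 1/c (strict or critical weak competition). If s < s* := max{2, 2√(a·d)}, then there exists no pair of twice continuously differentiable functions u, v : ℝ → ℝ with u(ξ) > 0 and v(ξ) > 0 for all ξ ∈ ℝ satisfying u'' − s·u' + u·(1 − u − c·v) = 0 and d·v'' − s·v' + v·(a − b·u − v) = 0 on ℝ together with lim_{ξ→−∞}(u(ξ), v(ξ)) = (0, 0). -/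
open Filter Real

private lemma deriv_diffble {w : ℝ → ℝ} (hw : ContDiff ℝ 2 w) :
    Differentiable ℝ (deriv w) := by
  have h2 : ContDiff ℝ ((1 : WithTop ℕ∞) + 1) w := by norm_num at hw ⊢; exact hw
  exact ((contDiff_succ_iff_deriv.mp h2).2.2).differentiable one_ne_zero

/-- Sturm comparison: a positive solution of `w'' - s w' + Q w = 0` on `(-∞, R]` with
`Q ≥ κ` there and `s² < 4κ` is impossible (oscillation). -/
private lemma sturm (w Q : ℝ → ℝ) (s κ R : ℝ) (hw : ContDiff ℝ 2 w)
    (hpos : ∀ ξ, 0 < w ξ) (hκ : s ^ 2 < 4 * κ)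
    (hQ : ∀ ξ, ξ ≤ R → κ ≤ Q ξ)
    (heq : ∀ ξ, ξ ≤ R → deriv (deriv w) ξ - s * deriv w ξ + Q ξ * w ξ = 0) :
    False := by
  have hw1 : Differentiable ℝ w := hw.differentiable (by norm_num)
  have hw2 : Differentiable ℝ (deriv w) := deriv_diffble hw
  have hκ0 : 0 < κ - s ^ 2 / 4 := by nlinarith
  set ω : ℝ := Real.sqrt (κ - s ^ 2 / 4) with hωdef
  have hω : 0 < ω := Real.sqrt_pos.mpr hκ0
  have hω2 : ω ^ 2 = κ - s ^ 2 / 4 := Real.sq_sqrt hκ0.le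
  set ξ0 : ℝ := R - π / ω with hξ0def
  have hξ0R : ξ0 ≤ R := by
    have : 0 < π / ω := div_pos Real.pi_pos hω
    simp only [hξ0def]
    linarith
  set y : ℝ → ℝ := fun t => Real.exp (s * t / 2) * Real.sin (ω * (t - ξ0)) with hy_def
  set y1 : ℝ → ℝ := fun t => Real.exp (s * t / 2) *
      (s / 2 * Real.sin (ω * (t - ξ0)) + ω * Real.cos (ω * (t - ξ0))) with hy1_def
  have hexp : ∀ t : ℝ, HasDerivAt (fun t => Real.exp (s * t / 2))
      (s / 2 * Real.exp (s * t / 2)) t := by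
    intro t
    have h : HasDerivAt (fun t : ℝ => s * t / 2) (s / 2) t := by
      simpa using ((hasDerivAt_id t).const_mul s).div_const 2
    simpa [mul_comm] using h.exp
  have hlin : ∀ t : ℝ, HasDerivAt (fun t : ℝ => ω * (t - ξ0)) ω t := by
    intro t
    simpa using ((hasDerivAt_id t).sub_const ξ0).const_mul ω
  have hsin : ∀ t : ℝ, HasDerivAt (fun t => Real.sin (ω * (t - ξ0)))
      (ω * Real.cos (ω * (t - ξ0))) t := by
    intro t
    simpa [mul_comm] using (hlin t).sin
  have hcos : ∀ t : ℝ, HasDerivAt (fun t => Real.cos (ω * (t - ξ0)))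
      (-(ω * Real.sin (ω * (t - ξ0)))) t := by
    intro t
    simpa [mul_comm] using (hlin t).cos
  have hy : ∀ t, HasDerivAt y (y1 t) t := by
    intro t
    have h := (hexp t).mul (hsin t)
    simp only [hy_def, hy1_def]
    exact h.congr_deriv (by ring)
  have hy1 : ∀ t, HasDerivAt y1
      (Real.exp (s * t / 2) * ((s ^ 2 / 4 - ω ^ 2) * Real.sin (ω * (t - ξ0))
        + s * ω * Real.cos (ω * (t - ξ0)))) t := by
    intro t
    have hin : HasDerivAt (fun t => s / 2 * Real.sin (ω * (t - ξ0)) + ω * Real.cos (ω * (t - ξ0)))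
        (s / 2 * (ω * Real.cos (ω * (t - ξ0))) + ω * (-(ω * Real.sin (ω * (t - ξ0))))) t :=
      ((hsin t).const_mul (s / 2)).add ((hcos t).const_mul ω)
    have h := (hexp t).mul hin
    simp only [hy1_def]
    exact h.congr_deriv (by ring)
  have hy2id : ∀ t : ℝ, Real.exp (s * t / 2) * ((s ^ 2 / 4 - ω ^ 2) * Real.sin (ω * (t - ξ0))
      + s * ω * Real.cos (ω * (t - ξ0))) = s * y1 t - κ * y t := by
    intro t
    simp only [hy_def, hy1_def]
    linear_combination (-(Real.exp (s * t / 2) * Real.sin (ω * (t - ξ0)))) * hω2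
  set W : ℝ → ℝ := fun t => Real.exp (-(s * t)) * (deriv w t * y t - w t * y1 t) with hW_def
  have hW : ∀ t, HasDerivAt W
      (-s * Real.exp (-(s * t)) * (deriv w t * y t - w t * y1 t)
        + Real.exp (-(s * t)) * (deriv (deriv w) t * y t - w t * (s * y1 t - κ * y t))) t := by
    intro t
    have hexp2 : HasDerivAt (fun t : ℝ => Real.exp (-(s * t))) (-s * Real.exp (-(s * t))) t := by
      have hl : HasDerivAt (fun t : ℝ => -(s * t)) (-s) t := by
        exact (((hasDerivAt_id t).const_mul s).neg).congr_deriv (by ring)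
      simpa [mul_comm] using hl.exp
    have hinner : HasDerivAt (fun t => deriv w t * y t - w t * y1 t)
        (deriv (deriv w) t * y t + deriv w t * y1 t
          - (deriv w t * y1 t + w t * (Real.exp (s * t / 2) * ((s ^ 2 / 4 - ω ^ 2) * Real.sin (ω * (t - ξ0))
            + s * ω * Real.cos (ω * (t - ξ0)))))) t :=
      (((hw2 t).hasDerivAt).mul (hy t)).sub (((hw1 t).hasDerivAt).mul (hy1 t))
    have h := hexp2.mul hinner
    refine h.congr_deriv ?_
    rw [hy2id t]
    ring
  have hWval : ∀ t, t ≤ R →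
      -s * Real.exp (-(s * t)) * (deriv w t * y t - w t * y1 t)
        + Real.exp (-(s * t)) * (deriv (deriv w) t * y t - w t * (s * y1 t - κ * y t))
      = Real.exp (-(s * t)) * (w t * y t * (κ - Q t)) := by
    intro t ht
    linear_combination Real.exp (-(s * t)) * y t * (heq t ht)
  have hWcont : Continuous W :=
    continuous_iff_continuousAt.mpr fun t => (hW t).differentiableAt.continuousAt
  have hRξ0 : ω * (R - ξ0) = π := by
    have h1 : R - ξ0 = π / ω := by rw [hξ0def]; ring
    rw [h1]
    field_simp
  have hanti : AntitoneOn W (Set.Icc ξ0 R) := by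
    apply antitoneOn_of_deriv_nonpos (convex_Icc _ _) hWcont.continuousOn
    · intro x _
      exact (hW x).differentiableAt.differentiableWithinAt
    · intro x hx
      rw [interior_Icc] at hx
      rw [(hW x).deriv, hWval x hx.2.le]
      have hy0 : 0 ≤ y x := by
        have h0 : 0 ≤ ω * (x - ξ0) := by nlinarith [hx.1]
        have hπ : ω * (x - ξ0) ≤ π := by nlinarith [hx.2, hRξ0]
        exact mul_nonneg (Real.exp_pos _).le (Real.sin_nonneg_of_nonneg_of_le_pi h0 hπ)
      have hqx : κ - Q x ≤ 0 := by linarith [hQ x hx.2.le]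
      have : w x * y x * (κ - Q x) ≤ 0 :=
        mul_nonpos_of_nonneg_of_nonpos (mul_nonneg (hpos x).le hy0) hqx
      exact mul_nonpos_of_nonneg_of_nonpos (Real.exp_pos _).le this
  have hWξ0 : W ξ0 = -(Real.exp (-(s * ξ0)) * Real.exp (s * ξ0 / 2) * ω * w ξ0) := by
    simp only [hW_def, hy_def, hy1_def, sub_self, mul_zero, Real.sin_zero, Real.cos_zero]
    ring
  have hWR : W R = Real.exp (-(s * R)) * Real.exp (s * R / 2) * ω * w R := by
    simp only [hW_def, hy_def, hy1_def, hRξ0, Real.sin_pi, Real.cos_pi]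
    ring
  have h1 : W ξ0 < 0 := by
    rw [hWξ0]
    have : 0 < Real.exp (-(s * ξ0)) * Real.exp (s * ξ0 / 2) * ω * w ξ0 := by
      have := hpos ξ0
      positivity
    linarith
  have h2 : 0 < W R := by
    rw [hWR]
    have := hpos R
    positivity
  have h3 : W R ≤ W ξ0 :=
    hanti ⟨le_refl _, hξ0R⟩ ⟨hξ0R, le_refl _⟩ hξ0R
  linarith

/-- For negative speed, a positive solution of `w'' - s w' + Q w = 0` on `(-∞, R]` with
`Q > 0` there and `w → 0` at `-∞` is impossible. -/
private lemma negspeed (w Q : ℝ → ℝ) (s R : ℝ) (hw : ContDiff ℝ 2 w)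
    (hpos : ∀ ξ, 0 < w ξ) (hs : s < 0)
    (hQ : ∀ ξ, ξ ≤ R → 0 < Q ξ)
    (heq : ∀ ξ, ξ ≤ R → deriv (deriv w) ξ - s * deriv w ξ + Q ξ * w ξ = 0)
    (hlim : Tendsto w atBot (nhds 0)) : False := by
  have hw1 : Differentiable ℝ w := hw.differentiable (by norm_num)
  have hw2 : Differentiable ℝ (deriv w) := deriv_diffble hw
  set h : ℝ → ℝ := fun t => Real.exp (-(s * t)) * deriv w t with hh_def
  have hH : ∀ t, HasDerivAt h
      (Real.exp (-(s * t)) * (deriv (deriv w) t - s * deriv w t)) t := by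
    intro t
    have hexp2 : HasDerivAt (fun t : ℝ => Real.exp (-(s * t))) (-s * Real.exp (-(s * t))) t := by
      have hl : HasDerivAt (fun t : ℝ => -(s * t)) (-s) t := by
        exact (((hasDerivAt_id t).const_mul s).neg).congr_deriv (by ring)
      simpa [mul_comm] using hl.exp
    have hp := hexp2.mul ((hw2 t).hasDerivAt)
    exact hp.congr_deriv (by ring)
  have hcont : Continuous h :=
    continuous_iff_continuousAt.mpr fun t => (hH t).differentiableAt.continuousAt
  have hanti : StrictAntiOn h (Set.Iic R) := by
    apply strictAntiOn_of_deriv_neg (convex_Iic R) hcont.continuousOn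
    intro x hx
    rw [interior_Iic] at hx
    have hxR : x ≤ R := hx.le
    rw [(hH x).deriv]
    have e := heq x hxR
    have e2 : deriv (deriv w) x - s * deriv w x = -(Q x * w x) := by linarith
    rw [e2]
    have e3 : 0 < Q x * w x := mul_pos (hQ x hxR) (hpos x)
    nlinarith [Real.exp_pos (-(s * x))]
  -- Step 1: h ≤ 0 on (-∞, R]
  have hnonpos : ∀ ξ, ξ ≤ R → h ξ ≤ 0 := by
    intro ξ1 hξ1
    by_contra hcon
    push_neg at hcon
    set M : ℝ := h ξ1 * Real.exp (s * (ξ1 - 1)) with hM_def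
    have hM : 0 < M := mul_pos hcon (Real.exp_pos _)
    have hlow : ∀ ζ, ζ ≤ ξ1 - 1 → M ≤ deriv w ζ := by
      intro ζ hζ
      have hζξ : ζ < ξ1 := by linarith
      have hζR : ζ ≤ R := by linarith
      have h1 : h ξ1 < h ζ := hanti hζR hξ1 hζξ
      have hε : Real.exp (s * (ξ1 - 1)) ≤ Real.exp (s * ζ) :=
        Real.exp_le_exp.mpr (by nlinarith)
      have e1 : M ≤ h ξ1 * Real.exp (s * ζ) := by
        rw [hM_def]; exact mul_le_mul_of_nonneg_left hε hcon.le
      have e2 : h ξ1 * Real.exp (s * ζ) < h ζ * Real.exp (s * ζ) :=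
        mul_lt_mul_of_pos_right h1 (Real.exp_pos _)
      have e3 : h ζ * Real.exp (s * ζ) = deriv w ζ := by
        rw [hh_def]
        dsimp only
        rw [mul_comm, ← mul_assoc, ← Real.exp_add]
        simp
      linarith
    set t1 : ℝ := ξ1 - 1 with ht1_def
    set ζ : ℝ := t1 - (w t1 / M + 1) with hζdef
    have haux : 0 < w t1 / M + 1 := by
      have := hpos t1
      positivity
    have hζlt : ζ < t1 := by rw [hζdef]; linarith
    obtain ⟨cpt, hcpt, hcd⟩ := exists_deriv_eq_slope w hζlt
      hw1.continuous.continuousOn (hw1.differentiableOn)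
    have hc1 : M ≤ deriv w cpt := hlow cpt hcpt.2.le
    have ht1ζ : t1 - ζ = w t1 / M + 1 := by rw [hζdef]; ring
    have hpos' : 0 < t1 - ζ := by linarith
    have hslope : w t1 - w ζ = deriv w cpt * (t1 - ζ) := by
      field_simp at hcd
      linarith [hcd]
    have hMd : M * (w t1 / M + 1) = w t1 + M := by field_simp
    have hineq : M * (t1 - ζ) ≤ deriv w cpt * (t1 - ζ) :=
      mul_le_mul_of_nonneg_right hc1 hpos'.le
    have hMt : M * (t1 - ζ) = w t1 + M := by rw [ht1ζ]; exact hMd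
    have : w ζ ≤ -M := by linarith [hineq, hMt, hslope]
    linarith [hpos ζ]
  -- Step 2: h < 0 on (-∞, R]
  have hneg : ∀ ξ, ξ ≤ R → h ξ < 0 := by
    intro ξ hξ
    have h1 : h ξ < h (ξ - 1) := hanti (by linarith : ξ - 1 ≤ R) hξ (by linarith)
    have h2 : h (ξ - 1) ≤ 0 := hnonpos _ (by linarith)
    linarith
  -- Step 3: w strictly decreasing on (-∞, R]
  have hwanti : StrictAntiOn w (Set.Iic R) := by
    apply strictAntiOn_of_deriv_neg (convex_Iic R) hw1.continuous.continuousOn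
    intro x hx
    rw [interior_Iic] at hx
    have h1 : h x < 0 := hneg x hx.le
    by_contra hcon
    push_neg at hcon
    have : 0 ≤ Real.exp (-(s * x)) * deriv w x :=
      mul_nonneg (Real.exp_pos _).le hcon
    rw [hh_def] at h1
    dsimp only at h1
    linarith
  -- Step 4: contradiction with the limit
  have hfin : w (R - 1) ≤ 0 := by
    apply ge_of_tendsto hlim
    refine eventually_atBot.mpr ⟨R - 2, fun ξ hξ => ?_⟩
    have := hwanti (show ξ ∈ Set.Iic R by simp only [Set.mem_Iic]; linarith)
      (show R - 1 ∈ Set.Iic R by simp only [Set.mem_Iic]; linarith)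
      (by linarith : ξ < R - 1)
    linarith
  linarith [hpos (R - 1)]

/-- Nonexistence of positive traveling waves for subcritical speeds `s < s*`
under strict or critical weak competition `b < a ≤ 1/c`. -/
theorem no_wave_subcritical
    (a b c d : ℝ) (ha : 0 < a) (hb : 0 < b) (hc : 0 < c) (hd : 0 < d)
    (hba : b < a) (hac : a ≤ 1 / c)
    (s : ℝ) (hs : s < max 2 (2 * Real.sqrt (a * d))) :
    ¬ ∃ u v : ℝ → ℝ, ContDiff ℝ 2 u ∧ ContDiff ℝ 2 v ∧
      (∀ ξ : ℝ, 0 < u ξ) ∧ (∀ ξ : ℝ, 0 < v ξ) ∧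
      (∀ ξ : ℝ, deriv (deriv u) ξ - s * deriv u ξ + u ξ * (1 - u ξ - c * v ξ) = 0) ∧
      (∀ ξ : ℝ, d * deriv (deriv v) ξ - s * deriv v ξ + v ξ * (a - b * u ξ - v ξ) = 0) ∧
      Tendsto u atBot (nhds 0) ∧ Tendsto v atBot (nhds 0) := by
  rintro ⟨u, v, hu2, hv2, hupos, hvpos, hueq, hveq, hulim, hvlim⟩
  have hsmall : ∀ ε : ℝ, 0 < ε → ∃ R : ℝ, ∀ ξ, ξ ≤ R → u ξ < ε ∧ v ξ < ε := by
    intro ε hε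
    have h1 := hulim.eventually_lt_const hε
    have h2 := hvlim.eventually_lt_const hε
    obtain ⟨R, hR⟩ := eventually_atBot.mp (h1.and h2)
    exact ⟨R, fun ξ hξ => hR ξ hξ⟩
  rcases lt_or_ge s 0 with hneg | hsnn
  · -- negative speed: use the u-equation
    obtain ⟨R, hR⟩ := hsmall (min (1 / 2) (1 / (2 * c))) (by positivity)
    apply negspeed u (fun ξ => 1 - u ξ - c * v ξ) s R hu2 hupos hneg _ _ hulim
    · intro ξ hξ
      obtain ⟨h1, h2⟩ := hR ξ hξ
      have hm1 : min (1 / 2) (1 / (2 * c)) ≤ (1 : ℝ) / 2 := min_le_left _ _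
      have hm2 : min (1 / 2) (1 / (2 * c)) ≤ 1 / (2 * c) := min_le_right _ _
      have hcv : c * v ξ < 1 / 2 := by
        have hv2' : v ξ < 1 / (2 * c) := lt_of_lt_of_le h2 hm2
        rw [show (1 : ℝ) / 2 = c * (1 / (2 * c)) by field_simp]
        exact mul_lt_mul_of_pos_left hv2' hc
      have hu2' : u ξ < 1 / 2 := lt_of_lt_of_le h1 hm1
      show (0:ℝ) < 1 - u ξ - c * v ξ
      linarith
    · intro ξ _
      linear_combination hueq ξ
  · rcases lt_max_iff.mp hs with h2 | had
    · -- 0 ≤ s < 2 : Sturm on the u-equation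
      have hs2 : s ^ 2 < 4 := by nlinarith
      obtain ⟨R, hR⟩ := hsmall (min ((4 - s ^ 2) / 16) ((4 - s ^ 2) / (16 * c)))
        (lt_min (by nlinarith) (by apply div_pos (by nlinarith) (by positivity)))
      apply sturm u (fun ξ => 1 - u ξ - c * v ξ) s ((s ^ 2 + 4) / 8) R hu2 hupos
        (by nlinarith)
      · intro ξ hξ
        obtain ⟨h1, h2⟩ := hR ξ hξ
        have hm1 : min ((4 - s ^ 2) / 16) ((4 - s ^ 2) / (16 * c)) ≤ (4 - s ^ 2) / 16 :=
          min_le_left _ _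
        have hm2 : min ((4 - s ^ 2) / 16) ((4 - s ^ 2) / (16 * c)) ≤ (4 - s ^ 2) / (16 * c) :=
          min_le_right _ _
        have hu' : u ξ < (4 - s ^ 2) / 16 := lt_of_lt_of_le h1 hm1
        have hcv : c * v ξ < (4 - s ^ 2) / 16 := by
          have hv' : v ξ < (4 - s ^ 2) / (16 * c) := lt_of_lt_of_le h2 hm2
          rw [show (4 - s ^ 2) / 16 = c * ((4 - s ^ 2) / (16 * c)) by field_simp]
          exact mul_lt_mul_of_pos_left hv' hc
        nlinarith
      · intro ξ _
        linear_combination hueq ξ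
    · -- 0 ≤ s < 2√(ad) : Sturm on the v-equation
      have hads : s ^ 2 < 4 * (a * d) := by
        have h4 : s ^ 2 < (2 * Real.sqrt (a * d)) ^ 2 := by
          apply pow_lt_pow_left₀ had hsnn
          norm_num
        have h5 : (2 * Real.sqrt (a * d)) ^ 2 = 4 * (a * d) := by
          rw [mul_pow, Real.sq_sqrt (by positivity : (0:ℝ) ≤ a * d)]
          ring
        linarith [h4, h5.symm.le]
      set δ : ℝ := (4 * a * d - s ^ 2) / (16 * d) with hδdef
      have hδ : 0 < δ := by
        apply div_pos (by nlinarith) (by positivity)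
      obtain ⟨R, hR⟩ := hsmall (min (δ / b) δ) (lt_min (by positivity) hδ)
      apply sturm v (fun ξ => (a - b * u ξ - v ξ) / d) (s / d)
        ((s ^ 2 / d ^ 2 + 4 * a / d) / 8) R hv2 hvpos
      · show (s / d) ^ 2 < 4 * ((s ^ 2 / d ^ 2 + 4 * a / d) / 8)
        rw [div_pow]
        have h2' : s ^ 2 / d ^ 2 < 4 * a / d := by
          rw [div_lt_div_iff₀ (by positivity) hd]
          nlinarith [mul_lt_mul_of_pos_right hads hd]
        linarith
      · intro ξ hξ
        obtain ⟨h1, h2⟩ := hR ξ hξ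
        have hu' : u ξ < δ / b := lt_of_lt_of_le h1 (min_le_left _ _)
        have hbu : b * u ξ < δ := by
          rw [show δ = b * (δ / b) by field_simp]
          exact mul_lt_mul_of_pos_left hu' hb
        have hv' : v ξ < δ := lt_of_lt_of_le h2 (min_le_right _ _)
        show (s ^ 2 / d ^ 2 + 4 * a / d) / 8 ≤ (a - b * u ξ - v ξ) / d
        rw [div_le_div_iff₀ (by norm_num : (0:ℝ) < 8) hd,
          show (s ^ 2 / d ^ 2 + 4 * a / d) * d = s ^ 2 / d + 4 * a by field_simp]
        have hsum : b * u ξ + v ξ < (4 * a * d - s ^ 2) / (8 * d) := by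
          have he : (4 * a * d - s ^ 2) / (8 * d) = 2 * δ := by rw [hδdef]; ring
          rw [he]; linarith
        rw [lt_div_iff₀ (by positivity : (0:ℝ) < 8 * d)] at hsum
        have hfin : s ^ 2 / d ≤ (a - b * u ξ - v ξ) * 8 - 4 * a := by
          rw [div_le_iff₀ hd]
          nlinarith [hsum]
        linarith
      · intro ξ _
        have h := hveq ξ
        field_simp
        linear_combination h
end

section
/- Assume a, b, c, d > 0 and s ≤ 0. Then there exists no pair of twice continuously differentiable functions u, v : ℝ → ℝ with u(ξ) > 0 and v(ξ) > 0 for all ξ ∈ ℝ satisfying u'' − s·u' + u·(1 − u − c·v) = 0 and d·v'' − s·v' + v·(a − b·u − v) = 0 on ℝ together with lim_{ξ→−∞}(u(ξ), v(ξ)) = (0, 0). -/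
open Filter Real

/-- Nonexistence of positive traveling waves with nonpositive speed `s ≤ 0`. -/
theorem no_wave_nonpositive_speed
    (a b c d : ℝ) (ha : 0 < a) (hb : 0 < b) (hc : 0 < c) (hd : 0 < d)
    (s : ℝ) (hs : s ≤ 0) :
    ¬ ∃ u v : ℝ → ℝ, ContDiff ℝ 2 u ∧ ContDiff ℝ 2 v ∧
      (∀ ξ : ℝ, 0 < u ξ) ∧ (∀ ξ : ℝ, 0 < v ξ) ∧
      (∀ ξ : ℝ, deriv (deriv u) ξ - s * deriv u ξ + u ξ * (1 - u ξ - c * v ξ) = 0) ∧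
      (∀ ξ : ℝ, d * deriv (deriv v) ξ - s * deriv v ξ + v ξ * (a - b * u ξ - v ξ) = 0) ∧
      Tendsto u atBot (nhds 0) ∧ Tendsto v atBot (nhds 0) := by
  rintro ⟨u, v, hu, hv, hupos, hvpos, hueq, hveq, hulim, hvlim⟩
  -- basic differentiability facts
  have hu' := (contDiff_succ_iff_deriv (n := 1)).mp (by exact_mod_cast hu)
  have hud : Differentiable ℝ u := hu'.1
  have hud1 : Differentiable ℝ (deriv u) := hu'.2.2.differentiable one_ne_zero
  -- choose ξ₀ with u + c v < 1 on (-∞, ξ₀]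
  have h1 : ∀ᶠ ξ in atBot, u ξ < 1/2 := hulim.eventually_lt_const (by norm_num)
  have h2 : ∀ᶠ ξ in atBot, c * v ξ < 1/2 := by
    have : Tendsto (fun ξ => c * v ξ) atBot (nhds (c * 0)) := hvlim.const_mul c
    rw [mul_zero] at this
    exact this.eventually_lt_const (by norm_num)
  obtain ⟨ξ₀, hξ₀⟩ := eventually_atBot.mp (h1.and h2)
  have hq : ∀ ξ ≤ ξ₀, 0 ≤ 1 - u ξ - c * v ξ := by
    intro ξ hξ
    obtain ⟨ha1, ha2⟩ := hξ₀ ξ hξ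
    linarith
  -- the auxiliary function φ
  set φ : ℝ → ℝ := fun x => Real.exp (-s * x) * deriv u x with hφdef
  have hφd : ∀ x : ℝ, HasDerivAt φ
      (Real.exp (-s * x) * (deriv (deriv u) x - s * deriv u x)) x := by
    intro x
    have he : HasDerivAt (fun y : ℝ => Real.exp (-s * y)) (Real.exp (-s * x) * (-s)) x := by
      have := ((hasDerivAt_id x).const_mul (-s)).exp
      simpa [mul_comm] using this
    have hd2 : HasDerivAt (deriv u) (deriv (deriv u) x) x :=
      (hud1 x).hasDerivAt
    have : HasDerivAt (fun y => Real.exp (-s * y) * deriv u y)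
        (Real.exp (-s * x) * (-s) * deriv u x + Real.exp (-s * x) * deriv (deriv u) x) x :=
      he.mul hd2
    convert this using 1
    ring
  have hφanti : AntitoneOn φ (Set.Iic ξ₀) := by
    apply antitoneOn_of_deriv_nonpos (convex_Iic ξ₀)
    · exact fun x _ => ((hφd x).continuousAt).continuousWithinAt
    · intro x _
      exact (hφd x).differentiableAt.differentiableWithinAt
    · intro x hx
      rw [interior_Iic] at hx
      rw [(hφd x).deriv]
      have heq := hueq x
      have hqx := hq x (le_of_lt hx)
      have : deriv (deriv u) x - s * deriv u x = -(u x * (1 - u x - c * v x)) := by linarith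
      rw [this]
      have h1 : 0 ≤ u x * (1 - u x - c * v x) := mul_nonneg (hupos x).le hqx
      have h2 : 0 < Real.exp (-s * x) := Real.exp_pos _
      nlinarith
  by_cases hA : ∃ ξ₅ ≤ ξ₀, 0 < deriv u ξ₅
  · -- Case A: derivative positive somewhere; u must become negative far left
    obtain ⟨ξ₅, hξ₅, hm⟩ := hA
    set m := deriv u ξ₅ with hmdef
    have hkey : ∀ ξ ≤ ξ₅, m ≤ deriv u ξ := by
      intro ξ hξ
      have hφ := hφanti (Set.mem_Iic.mpr (hξ.trans hξ₅)) (Set.mem_Iic.mpr hξ₅) hξ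
      -- φ ξ₅ ≤ φ ξ
      have hexp : Real.exp (-s * ξ₅) ≥ Real.exp (-s * ξ) := by
        apply Real.exp_le_exp.mpr
        nlinarith
      have hpξ : 0 < Real.exp (-s * ξ) := Real.exp_pos _
      have hpξ₅ : 0 < Real.exp (-s * ξ₅) := Real.exp_pos _
      -- exp(-sξ₅)*m ≤ exp(-sξ) * deriv u ξ and exp(-sξ) ≤ exp(-sξ₅)
      simp only [hφdef] at hφ
      nlinarith [hφ]
    -- u x - m * x is monotone on Iic ξ₅
    have hg : MonotoneOn (fun x => u x - m * x) (Set.Iic ξ₅) := by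
      apply monotoneOn_of_deriv_nonneg (convex_Iic ξ₅)
      · exact (hud.continuous.sub (continuous_const.mul continuous_id)).continuousOn
      · intro x _
        exact ((hud x).sub ((differentiable_const m).mul differentiable_id x)).differentiableWithinAt
      · intro x hx
        rw [interior_Iic] at hx
        have hder : HasDerivAt (fun x => u x - m * x) (deriv u x - m * 1) x :=
          (hud x).hasDerivAt.sub ((hasDerivAt_id x).const_mul m)
        rw [hder.deriv]
        have := hkey x hx.le
        linarith
    have hdivpos : 0 < u ξ₅ / m := div_pos (hupos ξ₅) hm
    have hξle : ξ₅ - u ξ₅ / m - 1 ≤ ξ₅ := by linarith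
    have hmono := hg (Set.mem_Iic.mpr hξle) (Set.mem_Iic.mpr le_rfl) hξle
    simp only at hmono
    have huξ := hupos (ξ₅ - u ξ₅ / m - 1)
    have hmu : m * (u ξ₅ / m) = u ξ₅ := by field_simp
    nlinarith
  · -- Case B: deriv u ≤ 0 on (-∞, ξ₀]; u stays ≥ u ξ₀, contradicting limit 0
    push_neg at hA
    have hanti : AntitoneOn u (Set.Iic ξ₀) := by
      apply antitoneOn_of_deriv_nonpos (convex_Iic ξ₀)
      · exact hud.continuous.continuousOn
      · exact fun x _ => (hud x).differentiableWithinAt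
      · intro x hx
        rw [interior_Iic] at hx
        exact hA x hx.le
    have hev : ∀ᶠ ξ in atBot, u ξ₀ ≤ u ξ := by
      rw [eventually_atBot]
      exact ⟨ξ₀, fun ξ hξ => hanti (Set.mem_Iic.mpr hξ) (Set.mem_Iic.mpr le_rfl) hξ⟩
    have := ge_of_tendsto hulim hev
    exact absurd this (not_le.mpr (hupos ξ₀))
end

section
/- Assume a, b, c, d > 0 and 0 < s < 2. Then there exists no pair of twice continuously differentiable functions u, v : ℝ → ℝ with u(ξ) > 0 and v(ξ) > 0 for all ξ ∈ ℝ satisfying u'' − s·u' + u·(1 − u − c·v) = 0 and d·v'' − s·v' + v·(a − b·u − v) = 0 on ℝ together with lim_{ξ→−∞}(u(ξ), v(ξ)) = (0, 0). -/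
open Filter Real Set

/-- Nonexistence of positive traveling waves for speeds `0 < s < 2`
(Sturm comparison argument on the `u`-equation). -/
theorem no_wave_speed_below_two
    (a b c d : ℝ) (ha : 0 < a) (hb : 0 < b) (hc : 0 < c) (hd : 0 < d)
    (s : ℝ) (hs0 : 0 < s) (hs2 : s < 2) :
    ¬ ∃ u v : ℝ → ℝ, ContDiff ℝ 2 u ∧ ContDiff ℝ 2 v ∧
      (∀ ξ : ℝ, 0 < u ξ) ∧ (∀ ξ : ℝ, 0 < v ξ) ∧
      (∀ ξ : ℝ, deriv (deriv u) ξ - s * deriv u ξ + u ξ * (1 - u ξ - c * v ξ) = 0) ∧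
      (∀ ξ : ℝ, d * deriv (deriv v) ξ - s * deriv v ξ + v ξ * (a - b * u ξ - v ξ) = 0) ∧
      Tendsto u atBot (nhds 0) ∧ Tendsto v atBot (nhds 0) := by
  rintro ⟨u, v, hu, hv, hup, hvp, hueq, hveq, hut, hvt⟩
  obtain ⟨k, hk, hkeq⟩ : ∃ k : ℝ, 0 < k ∧ 1 - s ^ 2 / 4 = k :=
    ⟨_, by nlinarith, rfl⟩
  have hA : Tendsto (fun ξ => u ξ + c * v ξ) atBot (nhds 0) := by
    have := hut.add (hvt.const_mul c)
    simpa using this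
  have hev : ∀ᶠ ξ in atBot, u ξ + c * v ξ < k / 2 :=
    hA.eventually (eventually_lt_nhds (by positivity))
  obtain ⟨T, hT⟩ := eventually_atBot.mp hev
  -- derivatives of u
  have hu1 : ∀ x : ℝ, HasDerivAt u (deriv u x) x := fun x =>
    ((hu.differentiable (by norm_num)) x).hasDerivAt
  have hud : ContDiff ℝ 1 (deriv u) := by
    have h2 : ContDiff ℝ ((1 : WithTop ℕ∞) + 1) u := by norm_num; exact hu
    exact (contDiff_succ_iff_deriv.mp h2).2.2
  have hu2 : ∀ x : ℝ, HasDerivAt (deriv u) (deriv (deriv u) x) x := fun x =>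
    ((hud.differentiable (by norm_num)) x).hasDerivAt
  set w : ℝ → ℝ := fun ξ => Real.exp (-(s / 2) * ξ) * u ξ with hw_def
  have hwpos : ∀ ξ, 0 < w ξ := fun ξ => mul_pos (Real.exp_pos _) (hup ξ)
  have hwcont : Continuous w := by
    rw [hw_def]
    exact (Real.continuous_exp.comp (continuous_const.mul continuous_id)).mul hu.continuous
  have he : ∀ ξ : ℝ, HasDerivAt (fun x : ℝ => Real.exp (-(s / 2) * x))
      (Real.exp (-(s / 2) * ξ) * (-(s / 2))) ξ := fun ξ => by
    simpa using ((hasDerivAt_id ξ).const_mul (-(s / 2))).exp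
  have hwd1 : ∀ ξ : ℝ, HasDerivAt w
      (Real.exp (-(s / 2) * ξ) * (deriv u ξ - s / 2 * u ξ)) ξ := by
    intro ξ
    have := (he ξ).fun_mul (hu1 ξ)
    refine this.congr_deriv ?_
    ring
  have hderw : deriv w = fun ξ => Real.exp (-(s / 2) * ξ) * (deriv u ξ - s / 2 * u ξ) :=
    funext fun ξ => (hwd1 ξ).deriv
  have hwd2 : ∀ ξ : ℝ, HasDerivAt (deriv w)
      (w ξ * (s ^ 2 / 4 - 1 + u ξ + c * v ξ)) ξ := by
    intro ξ
    rw [hderw]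
    have hg : HasDerivAt (fun x => deriv u x - s / 2 * u x)
        (deriv (deriv u) ξ - s / 2 * deriv u ξ) ξ :=
      (hu2 ξ).sub ((hu1 ξ).const_mul (s / 2))
    have hprod := (he ξ).fun_mul hg
    refine hprod.congr_deriv ?_
    have hode : deriv (deriv u) ξ = s * deriv u ξ - u ξ * (1 - u ξ - c * v ξ) := by
      linarith [hueq ξ]
    rw [hode]
    simp only [hw_def]
    ring
  have hdw_diff : Differentiable ℝ (deriv w) := fun ξ => (hwd2 ξ).differentiableAt
  have hderw2 : ∀ ξ : ℝ, deriv (deriv w) ξ = w ξ * (s ^ 2 / 4 - 1 + u ξ + c * v ξ) :=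
    fun ξ => (hwd2 ξ).deriv
  have hkey : ∀ ξ ≤ T, deriv (deriv w) ξ ≤ -(k / 2) * w ξ := by
    intro ξ hξ
    rw [hderw2]
    have h1 := hT ξ hξ
    have h2 := hwpos ξ
    nlinarith [hkeq]
  have hkeyneg : ∀ ξ ≤ T, deriv (deriv w) ξ < 0 := by
    intro ξ hξ
    have h1 := hkey ξ hξ
    have h2 : 0 < k / 2 * w ξ := mul_pos (half_pos hk) (hwpos ξ)
    linarith
  -- Step 1 : deriv w ≤ 0 on (-∞, T]
  have step1 : ∀ x ≤ T, deriv w x ≤ 0 := by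
    intro x0 hx0
    by_contra hpos
    push_neg at hpos
    have hanti : AntitoneOn (deriv w) (Iic x0) := by
      apply antitoneOn_of_deriv_nonpos (convex_Iic x0) hdw_diff.continuous.continuousOn
        hdw_diff.differentiableOn
      intro x hx
      rw [interior_Iic] at hx
      exact le_of_lt (hkeyneg x (le_trans (le_of_lt hx) hx0))
    have hlb : ∀ x ≤ x0, deriv w x0 ≤ deriv w x := fun x hx =>
      hanti (mem_Iic.2 hx) (mem_Iic.2 le_rfl) hx
    set c0 := deriv w x0 with hc0
    set ψ : ℝ → ℝ := fun x => w x - c0 * x with hψ_def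
    have hψd : ∀ x : ℝ, HasDerivAt ψ (deriv w x - c0) x := by
      intro x
      have h1 : HasDerivAt w (deriv w x) x := ((hwd1 x).differentiableAt).hasDerivAt
      have := h1.fun_sub ((hasDerivAt_id x).const_mul c0)
      simpa using this
    have hψcont : Continuous ψ := by
      rw [hψ_def]
      exact hwcont.sub (continuous_mul_left c0)
    have hψmono : MonotoneOn ψ (Iic x0) := by
      apply monotoneOn_of_deriv_nonneg (convex_Iic x0) hψcont.continuousOn
        (fun x _ => (hψd x).differentiableAt.differentiableWithinAt)
      intro x hx
      rw [interior_Iic] at hx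
      rw [(hψd x).deriv]
      have := hlb x (le_of_lt hx)
      linarith
    obtain ⟨x1, hx1le, hx1eq⟩ : ∃ x1 : ℝ, x1 ≤ x0 ∧ x1 = x0 - w x0 / c0 - 1 := by
      refine ⟨x0 - w x0 / c0 - 1, ?_, rfl⟩
      have : 0 < w x0 / c0 := div_pos (hwpos x0) hpos
      linarith
    have hmm := hψmono (mem_Iic.2 hx1le) (mem_Iic.2 (le_refl x0)) hx1le
    simp only [hψ_def] at hmm
    have hwx1 := hwpos x1
    have hfield : c0 * (w x0 / c0) = w x0 := by field_simp
    rw [hx1eq] at hmm hwx1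
    nlinarith
  -- w is antitone on (-∞, T]
  have hwanti : AntitoneOn w (Iic T) := by
    apply antitoneOn_of_deriv_nonpos (convex_Iic T) hwcont.continuousOn
      (fun x _ => ((hwd1 x).differentiableAt).differentiableWithinAt)
    intro x hx
    rw [interior_Iic] at hx
    exact step1 x (le_of_lt hx)
  obtain ⟨m, hm, hmeq⟩ : ∃ m : ℝ, 0 < m ∧ m = k / 2 * w T :=
    ⟨_, mul_pos (half_pos hk) (hwpos T), rfl⟩
  set φ : ℝ → ℝ := fun x => deriv w x + m * x with hφ_def
  have hφd : ∀ x : ℝ, HasDerivAt φ (deriv (deriv w) x + m) x := by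
    intro x
    have h1 : HasDerivAt (deriv w) (deriv (deriv w) x) x := (hdw_diff x).hasDerivAt
    have := h1.fun_add ((hasDerivAt_id x).const_mul m)
    simpa using this
  have hφcont : Continuous φ := by
    rw [hφ_def]
    exact hdw_diff.continuous.add (continuous_mul_left m)
  have hφanti : AntitoneOn φ (Iic T) := by
    apply antitoneOn_of_deriv_nonpos (convex_Iic T) hφcont.continuousOn
      (fun x _ => (hφd x).differentiableAt.differentiableWithinAt)
    intro x hx
    rw [interior_Iic] at hx
    rw [(hφd x).deriv]
    have h1 := hkey x (le_of_lt hx)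
    have h2 : w T ≤ w x := hwanti (mem_Iic.2 (le_of_lt hx)) (mem_Iic.2 le_rfl) (le_of_lt hx)
    have h3 := mul_le_mul_of_nonneg_left h2 (le_of_lt (half_pos hk))
    have h4 : -(k / 2) * w x ≤ -m := by rw [hmeq]; linarith
    linarith
  have hdwT : deriv w T ≤ 0 := step1 T le_rfl
  obtain ⟨x2, hx2le, hx2eq⟩ : ∃ x2 : ℝ, x2 ≤ T ∧ x2 = T - (1 - deriv w T) / m := by
    refine ⟨T - (1 - deriv w T) / m, ?_, rfl⟩
    have : 0 < (1 - deriv w T) / m := div_pos (by linarith) hm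
    linarith
  have hφin := hφanti (mem_Iic.2 hx2le) (mem_Iic.2 (le_refl T)) hx2le
  simp only [hφ_def] at hφin
  have hfield : m * ((1 - deriv w T) / m) = 1 - deriv w T := by field_simp
  have hx2T : deriv w x2 ≤ 0 := step1 x2 hx2le
  rw [hx2eq] at hφin hx2T
  nlinarith
end

section
/- Assume d > 0, strict weak competition 0 < b < a < 1/c, and let s ∈ ℝ. Let (u, v) be a pair of twice continuously differentiable functions solving u'' − s·u' + u·(1 − u − c·v) = 0 and d·v'' − s·v' + v·(a − b·u − v) = 0 on ℝ, and suppose there exist constants δ₁, δ₂ > 0 such that δ₁ ≤ u(ξ) ≤ 1 and δ₂ ≤ v(ξ) ≤ a for all ξ ≥ 0. Then lim_{ξ→+∞}(u(ξ), v(ξ)) = (u*, v*). -/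
set_option maxHeartbeats 1000000

open Filter Real Set Topology

section Auxiliary


lemma diff_deriv {f : ℝ → ℝ} (hf : ContDiff ℝ 2 f) : Differentiable ℝ (deriv f) := by
  have h : ContDiff ℝ (1 + 1) f := by norm_num; exact hf
  exact ((contDiff_succ_iff_deriv.mp h).2.2).differentiable one_ne_zero

lemma deriv2_nonpos_of_isLocalMax {f : ℝ → ℝ} (h1 : Differentiable ℝ f)
    (h2 : Differentiable ℝ (deriv f)) {x : ℝ} (h : IsLocalMax f x) :
    deriv (deriv f) x ≤ 0 := by
  by_contra hpos
  push_neg at hpos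
  have hfx : deriv f x = 0 := h.deriv_eq_zero
  have hd : HasDerivAt (deriv f) (deriv (deriv f) x) x := (h2 x).hasDerivAt
  have hslope := hasDerivAt_iff_tendsto_slope.mp hd
  have hmono : 𝓝[>] x ≤ 𝓝[≠] x := nhdsWithin_mono x fun y hy => ne_of_gt hy
  have hpos' : ∀ᶠ y in 𝓝[>] x, 0 < slope (deriv f) x y :=
    (hslope.mono_left hmono).eventually (eventually_gt_nhds hpos)
  have hfy : ∀ᶠ y in 𝓝[>] x, 0 < deriv f y := by
    filter_upwards [hpos', self_mem_nhdsWithin] with y hy hxy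
    have hne : y - x ≠ 0 := sub_ne_zero.2 (ne_of_gt hxy)
    have := mul_pos hy (sub_pos.2 hxy)
    rwa [slope_def_field, hfx, sub_zero, div_mul_cancel₀ _ hne] at this
  have hmax' : ∀ᶠ y in 𝓝[>] x, f y ≤ f x := h.filter_mono nhdsWithin_le_nhds
  obtain ⟨z, hz, hsub⟩ := mem_nhdsGT_iff_exists_Ioc_subset.mp (hfy.and hmax')
  have hxz : x < z := hz
  obtain ⟨cc, hcc, hceq⟩ := exists_hasDerivAt_eq_slope f (deriv f) hxz
    (h1.continuous.continuousOn) (fun y _ => (h1 y).hasDerivAt)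
  have hc1 : 0 < deriv f cc := (hsub ⟨hcc.1, le_of_lt hcc.2⟩).1
  have hfz : f z ≤ f x := (hsub ⟨hz, le_refl z⟩).2
  rw [hceq] at hc1
  have : (f z - f x) / (z - x) ≤ 0 :=
    div_nonpos_of_nonpos_of_nonneg (by linarith) (by linarith)
  linarith

lemma deriv2_nonneg_of_isLocalMin {f : ℝ → ℝ} (h1 : Differentiable ℝ f)
    (h2 : Differentiable ℝ (deriv f)) {x : ℝ} (h : IsLocalMin f x) :
    0 ≤ deriv (deriv f) x := by
  have hneg : IsLocalMax (fun y => -f y) x := h.neg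
  have e1 : deriv (fun y => -f y) = fun y => -deriv f y := funext fun y => deriv.neg
  have h2' : Differentiable ℝ (deriv fun y => -f y) := by rw [e1]; exact h2.neg
  have := deriv2_nonpos_of_isLocalMax (f := fun y => -f y) h1.neg h2' hneg
  rw [e1] at this
  have e2 : deriv (fun y => -deriv f y) x = -deriv (deriv f) x := deriv.neg
  rw [e2] at this
  linarith


lemma limsup_neg_real (w : ℝ → ℝ) (h1 : Filter.IsBoundedUnder (· ≤ ·) atTop w)
    (h2 : Filter.IsBoundedUnder (· ≥ ·) atTop w) :
    limsup (fun ξ => -w ξ) atTop = -(liminf w atTop) := by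
  have hco : IsCoboundedUnder (· ≤ ·) atTop (fun ξ => -w ξ) := by
    apply IsBoundedUnder.isCoboundedUnder_le
    obtain ⟨M, hM⟩ := h1
    refine isBoundedUnder_of_eventually_ge (a := -M) ?_
    filter_upwards [eventually_map.mp <| eventually_map.mpr hM] with ξ h using neg_le_neg h
  have hbd : IsBoundedUnder (· ≤ ·) atTop (fun ξ => -w ξ) := by
    obtain ⟨m, hm⟩ := h2
    refine isBoundedUnder_of_eventually_le (a := -m) ?_
    filter_upwards [eventually_map.mp <| eventually_map.mpr hm] with ξ h using neg_le_neg h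
  have hwco : IsCoboundedUnder (· ≥ ·) atTop w := h1.isCoboundedUnder_ge
  apply le_antisymm
  · apply le_of_forall_pos_le_add
    intro ε hε
    apply limsup_le_of_le hco
    filter_upwards [eventually_lt_of_lt_liminf (sub_lt_self (liminf w atTop) hε) h2] with ξ h
    linarith
  · have : ∀ ε > 0, -(liminf w atTop) - ε ≤ limsup (fun ξ => -w ξ) atTop := by
      intro ε hε
      apply le_limsup_of_frequently_le _ hbd
      have := frequently_lt_of_liminf_lt hwco (lt_add_of_pos_right (liminf w atTop) hε)
      exact this.mono fun ξ h => by linarith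
    by_contra hlt
    push_neg at hlt
    have := this ((-(liminf w atTop) - limsup (fun ξ => -w ξ) atTop) / 2) (by linarith)
    linarith

lemma quasi_max (w : ℝ → ℝ) (hw : ContDiff ℝ 2 w) (m M : ℝ)
    (hbd : ∀ᶠ ξ in atTop, m ≤ w ξ ∧ w ξ ≤ M) (ε N : ℝ) (hε : 0 < ε) :
    ∃ ξ₀, N ≤ ξ₀ ∧ limsup w atTop - ε < w ξ₀ ∧ w ξ₀ < limsup w atTop + ε ∧
      |deriv w ξ₀| ≤ 3 * ε ∧ deriv (deriv w) ξ₀ ≤ 2 * ε := by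
  have hwd : Differentiable ℝ w := hw.differentiable two_ne_zero
  have hwd2 : Differentiable ℝ (deriv w) := diff_deriv hw
  set L := limsup w atTop with hL
  have hBle : IsBoundedUnder (· ≤ ·) atTop w :=
    isBoundedUnder_of_eventually_le (hbd.mono fun _ h => h.2)
  have hBge : IsBoundedUnder (· ≥ ·) atTop w :=
    isBoundedUnder_of_eventually_ge (hbd.mono fun _ h => h.1)
  have hCo : IsCoboundedUnder (· ≤ ·) atTop w := hBge.isCoboundedUnder_le
  have hLM : L ≤ M := limsup_le_of_le hCo (hbd.mono fun _ h => h.2)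
  obtain ⟨T₀, hT₀⟩ := eventually_atTop.mp
    ((eventually_lt_of_limsup_lt (lt_add_of_pos_right L hε) hBle).and hbd)
  set T : ℝ := max T₀ N with hT
  set q : ℝ := (M - L + ε) / ε with hqdef
  have hq0 : 0 ≤ q := div_nonneg (by linarith) (le_of_lt hε)
  have hsq : Real.sqrt q ^ 2 = q := Real.sq_sqrt hq0
  have hsqnn : 0 ≤ Real.sqrt q := Real.sqrt_nonneg q
  have hεq : ε * q = M - L + ε := by rw [hqdef]; field_simp
  have hNT : N ≤ T := le_max_right _ _
  have hT₀T : T₀ ≤ T := le_max_left _ _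
  clear_value q
  clear hqdef
  clear_value T
  clear hT
  obtain ⟨ξ₁, hwξ₁, hξ₁T⟩ :=
    ((frequently_lt_of_lt_limsup hCo (sub_lt_self L hε)).and_eventually
      (eventually_ge_atTop (T + (Real.sqrt q + 1)))).exists
  clear_value L
  clear hL
  have hTξ₁ : T ≤ ξ₁ := by nlinarith
  -- the perturbed function
  set φ : ℝ → ℝ := fun ξ => w ξ - ε * (ξ - ξ₁) ^ 2 with hφ
  have hφc : Continuous φ :=
    hw.continuous.sub (continuous_const.mul ((continuous_id.sub continuous_const).pow 2))
  have hφξ₁ : φ ξ₁ = w ξ₁ := by simp [hφ]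
  -- max of φ on [T, ξ₁ + 2]
  have hTT₂ : T ≤ ξ₁ + 2 := by linarith
  obtain ⟨ξ₀, hξ₀mem, hξ₀max⟩ :=
    isCompact_Icc.exists_isMaxOn (nonempty_Icc.mpr hTT₂) hφc.continuousOn
  have hmemξ₁ : ξ₁ ∈ Icc T (ξ₁ + 2) := ⟨hTξ₁, by linarith⟩
  have hφ₁₀ : φ ξ₁ ≤ φ ξ₀ := hξ₀max hmemξ₁
  -- φ T < φ ξ₁
  have hφT : φ T < φ ξ₁ := by
    have hb := hT₀ T hT₀T
    have h1 : w T ≤ M := hb.2.2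
    have h2 : ε * (T - ξ₁) ^ 2 ≥ M - L + ε := by
      nlinarith [mul_nonneg (mul_nonneg hε.le (by linarith : (0:ℝ) ≤ ξ₁ - T - (Real.sqrt q + 1))) (by linarith : (0:ℝ) ≤ ξ₁ - T + (Real.sqrt q + 1)), mul_nonneg hε.le hsqnn]
    have : φ T ≤ L - ε := by simp only [hφ]; linarith
    rw [hφξ₁]; linarith
  -- φ (ξ₁+2) < φ ξ₁
  have hφT₂ : φ (ξ₁ + 2) < φ ξ₁ := by
    have hb := hT₀ (ξ₁ + 2) (by linarith)
    have h1 : w (ξ₁ + 2) < L + ε := hb.1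
    have : φ (ξ₁ + 2) = w (ξ₁ + 2) - ε * 4 := by simp only [hφ]; ring_nf
    rw [hφξ₁]; rw [this]; linarith
  -- ξ₀ is interior
  have hξ₀T : T < ξ₀ := by
    rcases lt_or_eq_of_le hξ₀mem.1 with h | h
    · exact h
    · exfalso; rw [h] at hφT; linarith
  have hξ₀T₂ : ξ₀ < ξ₁ + 2 := by
    rcases lt_or_eq_of_le hξ₀mem.2 with h | h
    · exact h
    · exfalso; rw [h] at hφ₁₀; linarith
  have hloc : IsLocalMax φ ξ₀ := hξ₀max.isLocalMax (Icc_mem_nhds hξ₀T hξ₀T₂)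
  -- derivative of φ
  have hqd : ∀ x : ℝ, HasDerivAt (fun ξ : ℝ => ε * (ξ - ξ₁) ^ 2) (ε * (2 * (x - ξ₁))) x := by
    intro x
    have h0 : HasDerivAt (fun ξ : ℝ => (ξ - ξ₁) ^ 2) (2 * (x - ξ₁) ^ 1 * 1) x :=
      ((hasDerivAt_id x).sub_const ξ₁).pow 2
    have := h0.const_mul ε
    simpa using this.congr_deriv (by ring)
  have hφd : ∀ x : ℝ, HasDerivAt φ (deriv w x - ε * (2 * (x - ξ₁))) x :=
    fun x => ((hwd x).hasDerivAt).sub (hqd x)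
  have hφ' : deriv φ = fun x => deriv w x - ε * (2 * (x - ξ₁)) :=
    funext fun x => (hφd x).deriv
  have hφ'0 : deriv φ ξ₀ = 0 := hloc.deriv_eq_zero
  have hw'val : deriv w ξ₀ = ε * (2 * (ξ₀ - ξ₁)) := by
    have := congrFun hφ' ξ₀; rw [hφ'0] at this; linarith [this.symm]
  -- second derivative
  have hφd2 : deriv (deriv φ) ξ₀ = deriv (deriv w) ξ₀ - ε * 2 := by
    rw [hφ']
    have h0 : HasDerivAt (fun x : ℝ => ε * (2 * (x - ξ₁))) (ε * 2) ξ₀ := by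
      have := (((hasDerivAt_id ξ₀).sub_const ξ₁).const_mul 2).const_mul ε
      simpa using this.congr_deriv (by ring)
    exact (((hwd2 ξ₀).hasDerivAt).sub h0).deriv
  have hφdd : Differentiable ℝ (deriv φ) := by
    rw [hφ']
    exact hwd2.sub (((differentiable_id.sub_const ξ₁).const_mul 2).const_mul ε)
  have hφdiff : Differentiable ℝ φ := fun x => (hφd x).differentiableAt
  have hsecond : deriv (deriv φ) ξ₀ ≤ 0 := deriv2_nonpos_of_isLocalMax hφdiff hφdd hloc
  have hw'' : deriv (deriv w) ξ₀ ≤ 2 * ε := by rw [hφd2] at hsecond; linarith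
  -- value bounds
  have hwξ₀lt : w ξ₀ < L + ε := (hT₀ ξ₀ (by linarith)).1
  have hφval : w ξ₀ - ε * (ξ₀ - ξ₁) ^ 2 ≥ w ξ₁ := by
    have := hφ₁₀; rw [hφξ₁] at this; simpa [hφ] using this
  clear_value φ
  have hwξ₀gt : L - ε < w ξ₀ := by linarith [mul_nonneg hε.le (sq_nonneg (ξ₀ - ξ₁))]
  have hsqbound : (ξ₀ - ξ₁) ^ 2 ≤ 2 := by nlinarith [hφval, hwξ₀lt, hwξ₁]
  have habs : |deriv w ξ₀| ≤ 3 * ε := by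
    rw [hw'val, abs_mul, abs_mul, abs_of_pos hε, abs_of_pos (by norm_num : (0:ℝ) < 2)]
    have h32 : |ξ₀ - ξ₁| ≤ 3 / 2 := by
      rw [abs_le]; constructor <;> nlinarith [sq_nonneg (ξ₀ - ξ₁ + 3/2), sq_nonneg (ξ₀ - ξ₁ - 3/2)]
    nlinarith [abs_nonneg (ξ₀ - ξ₁)]
  exact ⟨ξ₀, le_trans hNT (le_of_lt hξ₀T), hwξ₀gt, hwξ₀lt, habs, hw''⟩

lemma quasi_min (w : ℝ → ℝ) (hw : ContDiff ℝ 2 w) (m M : ℝ)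
    (hbd : ∀ᶠ ξ in atTop, m ≤ w ξ ∧ w ξ ≤ M) (ε N : ℝ) (hε : 0 < ε) :
    ∃ ξ₀, N ≤ ξ₀ ∧ liminf w atTop - ε < w ξ₀ ∧ w ξ₀ < liminf w atTop + ε ∧
      |deriv w ξ₀| ≤ 3 * ε ∧ -(2 * ε) ≤ deriv (deriv w) ξ₀ := by
  have hBle : IsBoundedUnder (· ≤ ·) atTop w :=
    isBoundedUnder_of_eventually_le (hbd.mono fun _ h => h.2)
  have hBge : IsBoundedUnder (· ≥ ·) atTop w :=
    isBoundedUnder_of_eventually_ge (hbd.mono fun _ h => h.1)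
  have hbd' : ∀ᶠ ξ in atTop, -M ≤ -w ξ ∧ -w ξ ≤ -m :=
    hbd.mono fun ξ h => ⟨neg_le_neg h.2, neg_le_neg h.1⟩
  obtain ⟨ξ₀, hN, h1, h2, h3, h4⟩ := quasi_max (fun ξ => -w ξ) hw.neg (-M) (-m) hbd' ε N hε
  rw [limsup_neg_real w hBle hBge] at h1 h2
  have e1 : deriv (fun ξ => -w ξ) = fun ξ => -deriv w ξ := funext fun _ => deriv.neg
  have h3' : |deriv w ξ₀| ≤ 3 * ε := by rw [e1] at h3; simpa [abs_neg] using h3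
  have h4' : -(deriv (deriv w) ξ₀) ≤ 2 * ε := by
    rw [e1] at h4
    rwa [show deriv (fun ξ => -deriv w ξ) ξ₀ = -deriv (deriv w) ξ₀ from deriv.neg] at h4
  refine ⟨ξ₀, hN, by linarith, by linarith, h3', by linarith⟩

lemma limsup_ineq (s : ℝ) (w g : ℝ → ℝ) (hw : ContDiff ℝ 2 w)
    (δ M d₀ G : ℝ) (hδ : 0 < δ) (hd₀ : 0 < d₀)
    (hbd : ∀ᶠ ξ in atTop, δ ≤ w ξ ∧ w ξ ≤ M)
    (heq : ∀ ξ, d₀ * deriv (deriv w) ξ - s * deriv w ξ + w ξ * (g ξ - w ξ) = 0)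
    (hG : ∀ ε, 0 < ε → ∀ᶠ ξ in atTop, g ξ ≤ G + ε) :
    limsup w atTop ≤ G := by
  set L := limsup w atTop with hL
  have h8 : 0 ≤ (3 * |s| + 2 * d₀) / δ := by positivity
  set K : ℝ := 2 + (3 * |s| + 2 * d₀) / δ with hKdef
  have hK : 0 < K := by positivity
  clear_value L K
  have key : ∀ ε, 0 < ε → -(K * ε) ≤ G - L := by
    intro ε hε
    obtain ⟨T, hT⟩ := eventually_atTop.mp ((hG ε hε).and hbd)
    obtain ⟨ξ₀, hξ₀T, hgt, hlt, habs, hsec⟩ := quasi_max w hw δ M hbd ε T hε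
    rw [← hL] at hgt hlt
    have eK : K * ε = 2 * ε + (3 * |s| + 2 * d₀) / δ * ε := by rw [hKdef]; ring
    obtain ⟨hgξ₀, hδξ₀, -⟩ := hT ξ₀ hξ₀T
    have heq₀ := heq ξ₀
    have hsw : -(|s| * (3 * ε)) ≤ s * deriv w ξ₀ := by
      have h1 : |s * deriv w ξ₀| ≤ |s| * (3 * ε) := by
        rw [abs_mul]; exact mul_le_mul_of_nonneg_left habs (abs_nonneg s)
      linarith [neg_abs_le (s * deriv w ξ₀)]
    have hdw : d₀ * deriv (deriv w) ξ₀ ≤ d₀ * (2 * ε) :=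
      mul_le_mul_of_nonneg_left hsec (le_of_lt hd₀)
    have hprod : -((3 * |s| + 2 * d₀) * ε) ≤ w ξ₀ * (g ξ₀ - w ξ₀) := by nlinarith
    have hup : g ξ₀ - w ξ₀ ≤ (G - L) + 2 * ε := by linarith
    rcases le_or_gt 0 (g ξ₀ - w ξ₀) with hcase | hcase
    · linarith [mul_nonneg h8 hε.le]
    · have h5 : w ξ₀ * (g ξ₀ - w ξ₀) ≤ δ * (g ξ₀ - w ξ₀) :=
        mul_le_mul_of_nonpos_right hδξ₀ (le_of_lt hcase)
      have h6 : -((3 * |s| + 2 * d₀) * ε) ≤ (g ξ₀ - w ξ₀) * δ := by nlinarith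
      have h7 : -((3 * |s| + 2 * d₀) * ε) / δ ≤ g ξ₀ - w ξ₀ := (div_le_iff₀ hδ).mpr h6
      have e : -((3 * |s| + 2 * d₀) * ε) / δ = -((3 * |s| + 2 * d₀) / δ * ε) := by ring
      rw [e] at h7
      linarith
  by_contra hGL
  push_neg at hGL
  have hstep := key ((L - G) / (2 * K)) (div_pos (by linarith) (mul_pos two_pos hK))
  have harith : K * ((L - G) / (2 * K)) = (L - G) / 2 := by
    field_simp
  rw [harith] at hstep
  linarith

lemma liminf_ineq (s : ℝ) (w g : ℝ → ℝ) (hw : ContDiff ℝ 2 w)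
    (δ M d₀ G : ℝ) (hδ : 0 < δ) (hd₀ : 0 < d₀)
    (hbd : ∀ᶠ ξ in atTop, δ ≤ w ξ ∧ w ξ ≤ M)
    (heq : ∀ ξ, d₀ * deriv (deriv w) ξ - s * deriv w ξ + w ξ * (g ξ - w ξ) = 0)
    (hG : ∀ ε, 0 < ε → ∀ᶠ ξ in atTop, G - ε ≤ g ξ) :
    G ≤ liminf w atTop := by
  set l := liminf w atTop with hl
  have h8 : 0 ≤ (3 * |s| + 2 * d₀) / δ := by positivity
  set K : ℝ := 2 + (3 * |s| + 2 * d₀) / δ with hKdef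
  have hK : 0 < K := by positivity
  clear_value l K
  have key : ∀ ε, 0 < ε → G - l ≤ K * ε := by
    intro ε hε
    obtain ⟨T, hT⟩ := eventually_atTop.mp ((hG ε hε).and hbd)
    obtain ⟨ξ₀, hξ₀T, hgt, hlt, habs, hsec⟩ := quasi_min w hw δ M hbd ε T hε
    rw [← hl] at hgt hlt
    have eK : K * ε = 2 * ε + (3 * |s| + 2 * d₀) / δ * ε := by rw [hKdef]; ring
    obtain ⟨hgξ₀, hδξ₀, -⟩ := hT ξ₀ hξ₀T
    have heq₀ := heq ξ₀
    have hsw : s * deriv w ξ₀ ≤ |s| * (3 * ε) := by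
      have h1 : |s * deriv w ξ₀| ≤ |s| * (3 * ε) := by
        rw [abs_mul]; exact mul_le_mul_of_nonneg_left habs (abs_nonneg s)
      linarith [le_abs_self (s * deriv w ξ₀)]
    have hdw : d₀ * (-(2 * ε)) ≤ d₀ * deriv (deriv w) ξ₀ :=
      mul_le_mul_of_nonneg_left hsec (le_of_lt hd₀)
    have hprod : w ξ₀ * (g ξ₀ - w ξ₀) ≤ (3 * |s| + 2 * d₀) * ε := by nlinarith
    have hlow : (G - l) - 2 * ε ≤ g ξ₀ - w ξ₀ := by linarith
    rcases le_or_gt (g ξ₀ - w ξ₀) 0 with hcase | hcase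
    · linarith [mul_nonneg h8 hε.le]
    · have h5 : δ * (g ξ₀ - w ξ₀) ≤ w ξ₀ * (g ξ₀ - w ξ₀) :=
        mul_le_mul_of_nonneg_right hδξ₀ (le_of_lt hcase)
      have h6 : (g ξ₀ - w ξ₀) * δ ≤ (3 * |s| + 2 * d₀) * ε := by nlinarith
      have h7 : g ξ₀ - w ξ₀ ≤ (3 * |s| + 2 * d₀) * ε / δ := (le_div_iff₀ hδ).mpr h6
      have e : (3 * |s| + 2 * d₀) * ε / δ = (3 * |s| + 2 * d₀) / δ * ε := by ring
      rw [e] at h7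
      linarith
  by_contra hGL
  push_neg at hGL
  have hstep := key ((G - l) / (2 * K)) (div_pos (by linarith) (mul_pos two_pos hK))
  have harith : K * ((G - l) / (2 * K)) = (G - l) / 2 := by
    field_simp
  rw [harith] at hstep
  linarith

end Auxiliary

/-- Shrinking-box argument: a solution of the traveling-wave system whose
components are uniformly bounded away from `0` (and bounded above by `1`,
resp. `a`) on `[0, ∞)` converges to the coexistence equilibrium at `+∞`. -/
theorem tendsto_coexistence_of_bounds
    (a b c d : ℝ) (hd : 0 < d) (hb : 0 < b) (hba : b < a) (hc : 0 < c)
    (hac : a < 1 / c) (s : ℝ)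
    (u v : ℝ → ℝ) (hu : ContDiff ℝ 2 u) (hv : ContDiff ℝ 2 v)
    (hueq : ∀ ξ : ℝ, deriv (deriv u) ξ - s * deriv u ξ + u ξ * (1 - u ξ - c * v ξ) = 0)
    (hveq : ∀ ξ : ℝ, d * deriv (deriv v) ξ - s * deriv v ξ + v ξ * (a - b * u ξ - v ξ) = 0)
    (δ₁ δ₂ : ℝ) (hδ₁ : 0 < δ₁) (hδ₂ : 0 < δ₂)
    (hub : ∀ ξ : ℝ, 0 ≤ ξ → δ₁ ≤ u ξ ∧ u ξ ≤ 1)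
    (hvb : ∀ ξ : ℝ, 0 ≤ ξ → δ₂ ≤ v ξ ∧ v ξ ≤ a) :
    Tendsto u atTop (nhds ((1 - a * c) / (1 - b * c))) ∧
    Tendsto v atTop (nhds ((a - b) / (1 - b * c))) := by
  have hbu : ∀ᶠ ξ in atTop, δ₁ ≤ u ξ ∧ u ξ ≤ 1 := eventually_atTop.mpr ⟨0, hub⟩
  have hbv : ∀ᶠ ξ in atTop, δ₂ ≤ v ξ ∧ v ξ ≤ a := eventually_atTop.mpr ⟨0, hvb⟩
  have bu_le : IsBoundedUnder (· ≤ ·) atTop u :=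
    isBoundedUnder_of_eventually_le (hbu.mono fun _ h => h.2)
  have bu_ge : IsBoundedUnder (· ≥ ·) atTop u :=
    isBoundedUnder_of_eventually_ge (hbu.mono fun _ h => h.1)
  have bv_le : IsBoundedUnder (· ≤ ·) atTop v :=
    isBoundedUnder_of_eventually_le (hbv.mono fun _ h => h.2)
  have bv_ge : IsBoundedUnder (· ≥ ·) atTop v :=
    isBoundedUnder_of_eventually_ge (hbv.mono fun _ h => h.1)
  set Lu := limsup u atTop with hLu
  set lu := liminf u atTop with hlu
  set Lv := limsup v atTop with hLv
  set lv := liminf v atTop with hlv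
  -- the four shrinking-box inequalities
  have ineq1 : Lu ≤ 1 - c * lv := by
    refine limsup_ineq s u (fun ξ => 1 - c * v ξ) hu δ₁ 1 1 (1 - c * lv) hδ₁ one_pos hbu
      (fun ξ => by linear_combination hueq ξ) ?_
    intro ε hε
    filter_upwards [eventually_lt_of_lt_liminf
      (sub_lt_self lv (by positivity : (0:ℝ) < ε / c)) bv_ge] with ξ h
    have e : c * (lv - ε / c) = c * lv - ε := by field_simp
    nlinarith [mul_lt_mul_of_pos_left h hc]
  have ineq2 : 1 - c * Lv ≤ lu := by
    refine liminf_ineq s u (fun ξ => 1 - c * v ξ) hu δ₁ 1 1 (1 - c * Lv) hδ₁ one_pos hbu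
      (fun ξ => by linear_combination hueq ξ) ?_
    intro ε hε
    filter_upwards [eventually_lt_of_limsup_lt
      (lt_add_of_pos_right Lv (by positivity : (0:ℝ) < ε / c)) bv_le] with ξ h
    have e : c * (Lv + ε / c) = c * Lv + ε := by field_simp
    nlinarith [mul_lt_mul_of_pos_left h hc]
  have ineq3 : Lv ≤ a - b * lu := by
    refine limsup_ineq s v (fun ξ => a - b * u ξ) hv δ₂ a d (a - b * lu) hδ₂ hd hbv
      (fun ξ => by linear_combination hveq ξ) ?_
    intro ε hε
    filter_upwards [eventually_lt_of_lt_liminf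
      (sub_lt_self lu (by positivity : (0:ℝ) < ε / b)) bu_ge] with ξ h
    have e : b * (lu - ε / b) = b * lu - ε := by field_simp
    nlinarith [mul_lt_mul_of_pos_left h hb]
  have ineq4 : a - b * Lu ≤ lv := by
    refine liminf_ineq s v (fun ξ => a - b * u ξ) hv δ₂ a d (a - b * Lu) hδ₂ hd hbv
      (fun ξ => by linear_combination hveq ξ) ?_
    intro ε hε
    filter_upwards [eventually_lt_of_limsup_lt
      (lt_add_of_pos_right Lu (by positivity : (0:ℝ) < ε / b)) bu_le] with ξ h
    have e : b * (Lu + ε / b) = b * Lu + ε := by field_simp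
    nlinarith [mul_lt_mul_of_pos_left h hb]
  -- algebra
  have hac1 : a * c < 1 := by
    have := (lt_div_iff₀ hc).mp hac
    linarith
  have hbc1 : b * c < 1 := by nlinarith
  have h1bc : 0 < 1 - b * c := by linarith
  have hu_le : Lu ≤ (1 - a * c) / (1 - b * c) := by
    rw [le_div_iff₀ h1bc]
    nlinarith [mul_le_mul_of_nonneg_left ineq4 hc.le]
  have hu_ge : (1 - a * c) / (1 - b * c) ≤ lu := by
    rw [div_le_iff₀ h1bc]
    nlinarith [mul_le_mul_of_nonneg_left ineq3 hc.le]
  have hstar : a - b * ((1 - a * c) / (1 - b * c)) = (a - b) / (1 - b * c) := by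
    field_simp
    ring
  have hv_le : Lv ≤ (a - b) / (1 - b * c) := by
    rw [← hstar]
    have := mul_le_mul_of_nonneg_left hu_ge hb.le
    linarith
  have hv_ge : (a - b) / (1 - b * c) ≤ lv := by
    rw [← hstar]
    have := mul_le_mul_of_nonneg_left hu_le hb.le
    linarith
  exact ⟨tendsto_of_le_liminf_of_limsup_le hu_ge hu_le bu_le bu_ge,
    tendsto_of_le_liminf_of_limsup_le hv_ge hv_le bv_le bv_ge⟩
end

section
/- Let a, b, c, d > 0, s ∈ ℝ, and let (u, v) be a pair of twice continuously differentiable functions with u(ξ) > 0 and v(ξ) > 0 for all ξ ∈ ℝ, solving u'' − s·u' + u·(1 − u − c·v) = 0 and d·v'' − s·v' + v·(a − b·u − v) = 0 on ℝ. If u is oscillatory near +∞ (i.e. there is no K ∈ ℝ such that u is monotone on [K, ∞)), then v is oscillatory near +∞; symmetrically, if v is oscillatory near +∞ then so is u. -/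
open Filter Real Set

/-- A function is oscillatory near `+∞` if it is not eventually monotone, i.e.
there is no `K` such that it is monotone (nondecreasing or nonincreasing) on
`[K, ∞)`. -/
def OscillatoryAtTop (w : ℝ → ℝ) : Prop :=
  ¬ ∃ K : ℝ, MonotoneOn w (Set.Ici K) ∨ AntitoneOn w (Set.Ici K)

open Topology in
/-- Second derivative test: at a local minimum of a `C²` function the second
derivative is nonnegative. -/
lemma deriv2_nonneg_of_isLocalMin' {w : ℝ → ℝ} (hw : ContDiff ℝ 2 w) {q : ℝ}
    (h : IsLocalMin w q) : 0 ≤ deriv (deriv w) q := by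
  by_contra hneg
  push_neg at hneg
  have hdw : Differentiable ℝ w := hw.differentiable (by norm_num)
  have hdw2 : Differentiable ℝ (deriv w) := by
    have h2 : ContDiff ℝ ((1 : WithTop ℕ∞) + 1) w := by
      rw [one_add_one_eq_two]; exact hw
    exact (contDiff_succ_iff_deriv.mp h2).2.2.differentiable one_ne_zero
  have hgq : deriv w q = 0 := h.deriv_eq_zero
  have hslope : Tendsto (slope (deriv w) q) (𝓝[≠] q) (𝓝 (deriv (deriv w) q)) :=
    hasDerivAt_iff_tendsto_slope.mp (hdw2 q).hasDerivAt
  have hev0 : ∀ᶠ x in 𝓝[≠] q, slope (deriv w) q x < 0 :=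
    hslope.eventually_lt_const hneg
  have hev : ∀ᶠ x in 𝓝[>] q, slope (deriv w) q x < 0 :=
    hev0.filter_mono (nhdsWithin_mono q (fun x hx => ne_of_gt hx))
  obtain ⟨e, he, hsub⟩ := mem_nhdsGT_iff_exists_Ioo_subset.mp hev
  obtain ⟨ε, hε, hball⟩ := Metric.eventually_nhds_iff.mp h
  set x0 : ℝ := min ((q + e) / 2) (q + ε / 2) with hx0
  have hqe : q < e := he
  have hqx0 : q < x0 := by
    apply lt_min <;> [linarith; linarith]
  have hx0e : x0 < e := lt_of_le_of_lt (min_le_left _ _) (by linarith)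
  have hx0ε : x0 - q < ε := by
    have := min_le_right ((q + e) / 2) (q + ε / 2)
    linarith
  obtain ⟨ξ, hξ, hξslope⟩ := exists_hasDerivAt_eq_slope w (deriv w) hqx0
    hdw.continuous.continuousOn (fun x _ => (hdw x).hasDerivAt)
  have hξmem : ξ ∈ Ioo q e := ⟨hξ.1, lt_trans hξ.2 hx0e⟩
  have hsl : slope (deriv w) q ξ < 0 := hsub hξmem
  have hgξ : deriv w ξ < 0 := by
    rw [slope_def_field] at hsl
    have hpos : 0 < ξ - q := by linarith [hξ.1]
    rw [hgq] at hsl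
    have := div_neg_iff.mp (by simpa using hsl)
    rcases this with ⟨_, h2⟩ | ⟨h1, _⟩
    · linarith
    · linarith
  have hw0 : w x0 < w q := by
    have hpos : 0 < x0 - q := by linarith
    have hdiv : (w x0 - w q) / (x0 - q) < 0 := by rw [← hξslope]; exact hgξ
    rcases div_neg_iff.mp hdiv with ⟨_, h2⟩ | ⟨h1, _⟩
    · linarith
    · linarith
  have : w q ≤ w x0 := hball (by rw [Real.dist_eq]; rw [abs_of_pos (by linarith)]; linarith)
  linarith

/-- Second derivative test: at a local maximum of a `C²` function the second
derivative is nonpositive. -/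
lemma deriv2_nonpos_of_isLocalMax' {w : ℝ → ℝ} (hw : ContDiff ℝ 2 w) {p : ℝ}
    (h : IsLocalMax w p) : deriv (deriv w) p ≤ 0 := by
  have hneg := deriv2_nonneg_of_isLocalMin' (hw.neg) h.neg
  have e1 : deriv (fun x => -w x) = fun x => -deriv w x := funext fun x => deriv.neg
  have e2 : deriv (deriv fun x => -w x) p = -(deriv (deriv w) p) := by
    rw [e1]; exact deriv.neg
  rw [e2] at hneg
  linarith

lemma not_monotoneOn_exists' {w : ℝ → ℝ} {s : Set ℝ} (h : ¬ MonotoneOn w s) :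
    ∃ x ∈ s, ∃ y ∈ s, x < y ∧ w y < w x := by
  rw [MonotoneOn] at h
  push_neg at h
  obtain ⟨x, hx, y, hy, hxy, hvw⟩ := h
  refine ⟨x, hx, y, hy, hxy.lt_of_ne ?_, hvw⟩
  rintro rfl
  exact absurd hvw (lt_irrefl _)

lemma not_antitoneOn_exists' {w : ℝ → ℝ} {s : Set ℝ} (h : ¬ AntitoneOn w s) :
    ∃ x ∈ s, ∃ y ∈ s, x < y ∧ w x < w y := by
  rw [AntitoneOn] at h
  push_neg at h
  obtain ⟨x, hx, y, hy, hxy, hvw⟩ := h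
  refine ⟨x, hx, y, hy, hxy.lt_of_ne ?_, hvw⟩
  rintro rfl
  exact absurd hvw (lt_irrefl _)

lemma exists_isLocalMax_between' {w : ℝ → ℝ} (hw : Continuous w) {x1 x2 y1 y2 : ℝ}
    (h12 : x1 < x2) (h2y : x2 ≤ y1) (hy12 : y1 < y2)
    (hup : w x1 < w x2) (hdown : w y2 < w y1) :
    ∃ p, p ∈ Ioo x1 y2 ∧ IsLocalMax w p ∧ w x1 < w p ∧ w y2 < w p := by
  have hle : x1 ≤ y2 := by linarith
  obtain ⟨p, hp, hmax⟩ := (isCompact_Icc : IsCompact (Icc x1 y2)).exists_isMaxOn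
    ⟨x1, le_refl x1, hle⟩ hw.continuousOn
  have hmax' := isMaxOn_iff.mp hmax
  have hx2 : w x2 ≤ w p := hmax' x2 ⟨le_of_lt h12, by linarith⟩
  have hy1 : w y1 ≤ w p := hmax' y1 ⟨by linarith, le_of_lt hy12⟩
  have h1 : w x1 < w p := lt_of_lt_of_le hup hx2
  have h2 : w y2 < w p := lt_of_lt_of_le hdown hy1
  have hpo : p ∈ Ioo x1 y2 := by
    refine ⟨lt_of_le_of_ne hp.1 ?_, lt_of_le_of_ne hp.2 ?_⟩
    · rintro rfl; exact absurd h1 (lt_irrefl _)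
    · rintro rfl; exact absurd h2 (lt_irrefl _)
  exact ⟨p, hpo, hmax.isLocalMax (Icc_mem_nhds hpo.1 hpo.2), h1, h2⟩

lemma exists_isLocalMin_between' {w : ℝ → ℝ} (hw : Continuous w) {x1 x2 y1 y2 : ℝ}
    (h12 : x1 < x2) (h2y : x2 ≤ y1) (hy12 : y1 < y2)
    (hdown : w x2 < w x1) (hup : w y1 < w y2) :
    ∃ q, q ∈ Ioo x1 y2 ∧ IsLocalMin w q ∧ w q < w x1 ∧ w q < w y2 := by
  have hle : x1 ≤ y2 := by linarith
  obtain ⟨q, hq, hmin⟩ := (isCompact_Icc : IsCompact (Icc x1 y2)).exists_isMinOn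
    ⟨x1, le_refl x1, hle⟩ hw.continuousOn
  have hmin' := isMinOn_iff.mp hmin
  have hx2 : w q ≤ w x2 := hmin' x2 ⟨le_of_lt h12, by linarith⟩
  have hy1 : w q ≤ w y1 := hmin' y1 ⟨by linarith, le_of_lt hy12⟩
  have h1 : w q < w x1 := lt_of_le_of_lt hx2 hdown
  have h2 : w q < w y2 := lt_of_le_of_lt hy1 hup
  have hpo : q ∈ Ioo x1 y2 := by
    refine ⟨lt_of_le_of_ne hq.1 ?_, lt_of_le_of_ne hq.2 ?_⟩
    · rintro rfl; exact absurd h1 (lt_irrefl _)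
    · rintro rfl; exact absurd h2 (lt_irrefl _)
  exact ⟨q, hpo, hmin.isLocalMin (Icc_mem_nhds hpo.1 hpo.2), h1, h2⟩

/-- Key abstract lemma: if `w` is continuous and oscillatory at `+∞`, and `h`
dominates `w` at local maxima while being dominated at local minima, then `h`
is oscillatory at `+∞` as well. -/
lemma key_osc {w h : ℝ → ℝ} (hw : Continuous w)
    (hmax : ∀ p, IsLocalMax w p → w p ≤ h p)
    (hmin : ∀ q, IsLocalMin w q → h q ≤ w q)
    (hosc : OscillatoryAtTop w) : OscillatoryAtTop h := by
  rintro ⟨K, hK⟩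
  have hnm : ∀ X : ℝ, ∃ x ∈ Ici X, ∃ y ∈ Ici X, x < y ∧ w y < w x :=
    fun X => not_monotoneOn_exists' (fun hX => hosc ⟨X, Or.inl hX⟩)
  have hna : ∀ X : ℝ, ∃ x ∈ Ici X, ∃ y ∈ Ici X, x < y ∧ w x < w y :=
    fun X => not_antitoneOn_exists' (fun hX => hosc ⟨X, Or.inr hX⟩)
  rcases hK with hMono | hAnti
  · -- find local max p then local min q with p < q, w q < w p
    obtain ⟨c, hcK, d, hdK, hcd, hwcd⟩ := hna K
    obtain ⟨a', haK, b', hbK, hab, hwab⟩ := hnm d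
    obtain ⟨p, hpIoo, hpmax, _, hbp⟩ :=
      exists_isLocalMax_between' hw hcd haK hab hwcd hwab
    obtain ⟨e, heK, f, hfK, hef, hwef⟩ := hna b'
    obtain ⟨q, hqIoo, hqmin, hqp, _⟩ :=
      exists_isLocalMin_between' hw hpIoo.2 heK hef hbp hwef
    have hpK : p ∈ Ici K := le_trans hcK (le_of_lt hpIoo.1)
    have hqK : q ∈ Ici K := le_trans hpK (le_of_lt hqIoo.1)
    have := hMono hpK hqK (le_of_lt hqIoo.1)
    have h1 := hmax p hpmax
    have h2 := hmin q hqmin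
    linarith
  · -- find local min q then local max p with q < p, w q < w p
    obtain ⟨a, haK, b, hbK, hab, hwab⟩ := hnm K
    obtain ⟨c, hcK, d, hdK, hcd, hwcd⟩ := hna b
    obtain ⟨q, hqIoo, hqmin, _, hqd⟩ :=
      exists_isLocalMin_between' hw hab hcK hcd hwab hwcd
    obtain ⟨e, heK, f, hfK, hef, hwef⟩ := hnm d
    obtain ⟨p, hpIoo, hpmax, hqp, _⟩ :=
      exists_isLocalMax_between' hw hqIoo.2 heK hef hqd hwef
    have hqK : q ∈ Ici K := le_trans haK (le_of_lt hqIoo.1)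
    have hpK : p ∈ Ici K := le_trans hqK (le_of_lt hpIoo.1)
    have := hAnti hqK hpK (le_of_lt hpIoo.1)
    have h1 := hmax p hpmax
    have h2 := hmin q hqmin
    linarith

lemma osc_of_osc_affine {A B : ℝ} (hB : 0 < B) {f : ℝ → ℝ}
    (h : OscillatoryAtTop (fun ξ => A - B * f ξ)) : OscillatoryAtTop f := by
  rintro ⟨K, hK | hK⟩
  · refine h ⟨K, Or.inr fun x hx y hy hxy => ?_⟩
    have := hK hx hy hxy
    simp only
    nlinarith
  · refine h ⟨K, Or.inl fun x hx y hy hxy => ?_⟩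
    have := hK hx hy hxy
    simp only
    nlinarith

/-- Cooperative oscillation at `+∞`: for positive solutions of the
traveling-wave system, if one component oscillates near `+∞` then so does the
other. -/
theorem oscillation_propagates
    (a b c d : ℝ) (ha : 0 < a) (hb : 0 < b) (hc : 0 < c) (hd : 0 < d) (s : ℝ)
    (u v : ℝ → ℝ) (hu : ContDiff ℝ 2 u) (hv : ContDiff ℝ 2 v)
    (hupos : ∀ ξ : ℝ, 0 < u ξ) (hvpos : ∀ ξ : ℝ, 0 < v ξ)
    (hueq : ∀ ξ : ℝ, deriv (deriv u) ξ - s * deriv u ξ + u ξ * (1 - u ξ - c * v ξ) = 0)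
    (hveq : ∀ ξ : ℝ, d * deriv (deriv v) ξ - s * deriv v ξ + v ξ * (a - b * u ξ - v ξ) = 0) :
    (OscillatoryAtTop u → OscillatoryAtTop v) ∧
    (OscillatoryAtTop v → OscillatoryAtTop u) := by
  constructor
  · intro hosc
    have hmaxu : ∀ p, IsLocalMax u p → u p ≤ (fun ξ => 1 - c * v ξ) p := by
      intro p hp
      have h1 : deriv u p = 0 := hp.deriv_eq_zero
      have h2 : deriv (deriv u) p ≤ 0 := deriv2_nonpos_of_isLocalMax' hu hp
      have he := hueq p
      rw [h1] at he
      have hm : 0 ≤ u p * (1 - u p - c * v p) := by nlinarith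
      have hX : 0 ≤ 1 - u p - c * v p := by nlinarith [hupos p]
      simp only
      linarith
    have hminu : ∀ q, IsLocalMin u q → (fun ξ => 1 - c * v ξ) q ≤ u q := by
      intro q hq
      have h1 : deriv u q = 0 := hq.deriv_eq_zero
      have h2 : 0 ≤ deriv (deriv u) q := deriv2_nonneg_of_isLocalMin' hu hq
      have he := hueq q
      rw [h1] at he
      have hm : u q * (1 - u q - c * v q) ≤ 0 := by nlinarith
      have hX : 1 - u q - c * v q ≤ 0 := by nlinarith [hupos q]
      simp only
      linarith
    exact osc_of_osc_affine hc (key_osc (hu.continuous) hmaxu hminu hosc)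
  · intro hosc
    have hmaxv : ∀ p, IsLocalMax v p → v p ≤ (fun ξ => a - b * u ξ) p := by
      intro p hp
      have h1 : deriv v p = 0 := hp.deriv_eq_zero
      have h2 : deriv (deriv v) p ≤ 0 := deriv2_nonpos_of_isLocalMax' hv hp
      have he := hveq p
      rw [h1] at he
      have hm : 0 ≤ v p * (a - b * u p - v p) := by nlinarith
      have hX : 0 ≤ a - b * u p - v p := by nlinarith [hvpos p]
      simp only
      linarith
    have hminv : ∀ q, IsLocalMin v q → (fun ξ => a - b * u ξ) q ≤ v q := by
      intro q hq
      have h1 : deriv v q = 0 := hq.deriv_eq_zero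
      have h2 : 0 ≤ deriv (deriv v) q := deriv2_nonneg_of_isLocalMin' hv hq
      have he := hveq q
      rw [h1] at he
      have hm : v q * (a - b * u q - v q) ≤ 0 := by nlinarith
      have hX : a - b * u q - v q ≤ 0 := by nlinarith [hvpos q]
      simp only
      linarith
    exact osc_of_osc_affine hb (key_osc (hv.continuous) hmaxv hminv hosc)
end

section
/- Fix d > 0, s ∈ ℝ, a > b > 0, and M > 0. Then there exists a constant C > 0, depending only on M, s, d, a, b (and in particular independent of c), such that for every c with 0 < c < 1/a and every pair (u, v) of twice continuously differentiable functions solving u'' − s·u' + u·(1 − u − c·v) = 0 and d·v'' − s·v' + v·(a − b·u − v) = 0 on ℝ with 0 < u(ξ) < 1 and 0 < v(ξ) < a for all ξ ∈ ℝ, the functions u and v are three times differentiable on ℝ and for every ξ ∈ [−M, M] and every k ∈ {1, 2, 3} one has |u^{(k)}(ξ)| ≤ C and |v^{(k)}(ξ)| ≤ C. -/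
open Filter Real Set

lemma contdiff2_deriv {u : ℝ → ℝ} (hu : ContDiff ℝ 2 u) : Differentiable ℝ (deriv u) := by
  have h2 : ContDiff ℝ (1+1) u := by exact_mod_cast hu
  exact ((contDiff_succ_iff_deriv.mp h2).2.2).differentiable one_ne_zero

/-- Key interior estimate for the first derivative. -/
lemma key_deriv_bound (s M K B : ℝ) (hK : 0 ≤ K) (hB : 0 ≤ B) (hM : 0 < M)
    (f h : ℝ → ℝ) (hf : ContDiff ℝ 2 f) (hh : Continuous h)
    (hode : ∀ ξ, deriv (deriv f) ξ = s * deriv f ξ - h ξ)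
    (hhb : ∀ ξ, |h ξ| ≤ K)
    (hfb : ∀ ξ, |f ξ| ≤ B) :
    ∀ ξ ∈ Set.Icc (-M) M, |deriv f ξ| ≤ exp (2 * |s| * (M + 1)) * (2 * B + K) := by
  intro ξ hξ
  obtain ⟨hξ1, hξ2⟩ := hξ
  have hfd : Differentiable ℝ f := hf.differentiable two_ne_zero
  have hfd' : Differentiable ℝ (deriv f) := contdiff2_deriv hf
  obtain ⟨η, hη, hslope⟩ := exists_hasDerivAt_eq_slope f (deriv f) (by linarith : ξ < ξ + 1)
    (hfd.continuous.continuousOn) (fun x _ => (hfd x).hasDerivAt)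
  have hone : ξ + 1 - ξ = 1 := by ring
  rw [hone, div_one] at hslope
  have hpη : |deriv f η| ≤ 2 * B := by
    rw [hslope]
    have h1 := abs_le.mp (hfb (ξ + 1)); have h2 := abs_le.mp (hfb ξ)
    rw [abs_le]; constructor <;> linarith [h1.1, h1.2, h2.1, h2.2]
  set q : ℝ → ℝ := fun x => exp (-(s * x)) * deriv f x with hq
  have hqd : ∀ x : ℝ, HasDerivAt q (-(exp (-(s * x)) * h x)) x := by
    intro x
    have h1 : HasDerivAt (fun x : ℝ => exp (-(s * x))) (-s * exp (-(s * x))) x := by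
      have := (Real.hasDerivAt_exp (-(s * x))).comp x
        (((hasDerivAt_id x).const_mul s).neg)
      exact this.congr_deriv (by ring)
    have h2 : HasDerivAt (deriv f) (deriv (deriv f) x) x := (hfd' x).hasDerivAt
    have := h1.mul h2
    exact this.congr_deriv (by rw [hode x]; ring)
  have hcont : Continuous fun t : ℝ => -(exp (-(s * t)) * h t) := by
    apply Continuous.neg
    exact (((continuous_const.mul continuous_id).neg).rexp).mul hh
  have hint : ∫ t in ξ..η, -(exp (-(s * t)) * h t) = q η - q ξ :=
    intervalIntegral.integral_eq_sub_of_hasDerivAt (fun t _ => hqd t)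
      (hcont.intervalIntegrable ξ η)
  have hE : (0:ℝ) < exp (|s| * (M + 1)) := exp_pos _
  have hexpb : ∀ t : ℝ, -M ≤ t → t ≤ M + 1 → exp (-(s * t)) ≤ exp (|s| * (M + 1)) := by
    intro t ht1 ht2
    apply exp_le_exp.mpr
    have habs : |t| ≤ M + 1 := abs_le.mpr ⟨by linarith, ht2⟩
    calc -(s * t) ≤ |s * t| := neg_le_abs _
      _ = |s| * |t| := abs_mul s t
      _ ≤ |s| * (M + 1) := mul_le_mul_of_nonneg_left habs (abs_nonneg s)
  have hbd : ∀ t ∈ Set.uIoc ξ η, ‖-(exp (-(s * t)) * h t)‖ ≤ exp (|s| * (M + 1)) * K := by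
    intro t ht
    rw [Set.uIoc_of_le (le_of_lt hη.1)] at ht
    have ht1 : -M ≤ t := le_trans hξ1 (le_of_lt ht.1)
    have ht2 : t ≤ M + 1 := le_trans ht.2 (by linarith [hη.2.le])
    rw [norm_neg, norm_mul, Real.norm_eq_abs, Real.norm_eq_abs, abs_exp]
    exact mul_le_mul (hexpb t ht1 ht2) (hhb t) (abs_nonneg _) hE.le
  have hile : ‖∫ t in ξ..η, -(exp (-(s * t)) * h t)‖ ≤ exp (|s| * (M + 1)) * K * |η - ξ| :=
    intervalIntegral.norm_integral_le_of_norm_le_const hbd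
  have hηξ : |η - ξ| ≤ 1 := by
    rw [abs_of_nonneg (by linarith [hη.1.le] : (0:ℝ) ≤ η - ξ)]; linarith [hη.2.le]
  have hqξ : |q ξ| ≤ exp (|s| * (M + 1)) * (2 * B) + exp (|s| * (M + 1)) * K := by
    have h1 : |q ξ| ≤ |q η| + |q η - q ξ| := by
      have := abs_sub_abs_le_abs_sub (q ξ) (q η)
      have h2 := abs_sub_comm (q ξ) (q η)
      nlinarith [abs_nonneg (q η - q ξ), abs_nonneg (q ξ)]
    have hqη : |q η| ≤ exp (|s| * (M + 1)) * (2 * B) := by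
      rw [hq]; simp only []
      rw [abs_mul, abs_exp]
      apply mul_le_mul (hexpb η (by linarith [hη.1.le]) (by linarith [hη.2.le])) hpη
        (abs_nonneg _) hE.le
    have hdiff : |q η - q ξ| ≤ exp (|s| * (M + 1)) * K := by
      rw [← hint]
      calc ‖∫ t in ξ..η, -(exp (-(s * t)) * h t)‖ ≤ exp (|s| * (M + 1)) * K * |η - ξ| := hile
        _ ≤ exp (|s| * (M + 1)) * K * 1 := by
            apply mul_le_mul_of_nonneg_left hηξ (by positivity)
        _ = exp (|s| * (M + 1)) * K := by ring
    linarith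
  have hrec : deriv f ξ = exp (s * ξ) * q ξ := by
    rw [hq]; simp only []
    rw [← mul_assoc, ← exp_add]
    simp
  rw [hrec, abs_mul, abs_exp]
  have he2 : exp (s * ξ) ≤ exp (|s| * (M + 1)) := by
    apply exp_le_exp.mpr
    have habs : |ξ| ≤ M + 1 := abs_le.mpr ⟨by linarith, by linarith⟩
    calc s * ξ ≤ |s * ξ| := le_abs_self _
      _ = |s| * |ξ| := abs_mul s ξ
      _ ≤ |s| * (M + 1) := mul_le_mul_of_nonneg_left habs (abs_nonneg s)
  calc exp (s * ξ) * |q ξ|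
      ≤ exp (|s| * (M + 1)) * (exp (|s| * (M + 1)) * (2 * B) + exp (|s| * (M + 1)) * K) := by
        apply mul_le_mul he2 hqξ (abs_nonneg _) hE.le
    _ = exp (|s| * (M + 1)) * exp (|s| * (M + 1)) * (2 * B + K) := by ring
    _ = exp (2 * |s| * (M + 1)) * (2 * B + K) := by
        rw [← exp_add]; ring_nf

set_option maxHeartbeats 2000000 in
/-- Interior derivative estimates, uniform in `c`: on any compact interval
`[-M, M]`, the first three derivatives of a bounded positive solution of the
traveling-wave system are bounded by a constant depending only on
`M, s, d, a, b` (and not on `c ∈ (0, 1/a)`). -/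
theorem interior_estimate_uniform_in_c
    (d s a b M : ℝ) (hd : 0 < d) (hb : 0 < b) (hba : b < a) (hM : 0 < M) :
    ∃ C : ℝ, 0 < C ∧
      ∀ c : ℝ, 0 < c → c < 1 / a →
        ∀ u v : ℝ → ℝ, ContDiff ℝ 2 u → ContDiff ℝ 2 v →
          (∀ ξ : ℝ, deriv (deriv u) ξ - s * deriv u ξ + u ξ * (1 - u ξ - c * v ξ) = 0) →
          (∀ ξ : ℝ, d * deriv (deriv v) ξ - s * deriv v ξ + v ξ * (a - b * u ξ - v ξ) = 0) →
          (∀ ξ : ℝ, 0 < u ξ ∧ u ξ < 1) → (∀ ξ : ℝ, 0 < v ξ ∧ v ξ < a) →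
          (Differentiable ℝ (iteratedDeriv 2 u) ∧ Differentiable ℝ (iteratedDeriv 2 v)) ∧
          ∀ ξ ∈ Set.Icc (-M) M, ∀ k ∈ ({1, 2, 3} : Finset ℕ),
            |iteratedDeriv k u ξ| ≤ C ∧ |iteratedDeriv k v ξ| ≤ C := by
  have ha : 0 < a := lt_trans hb hba
  set C1u : ℝ := exp (2 * |s| * (M + 1)) * (2 * 1 + 1) with hC1u
  set C1v : ℝ := exp (2 * |s / d| * (M + 1)) * (2 * a + a ^ 2 / d) with hC1v
  set C2u : ℝ := |s| * C1u + 1 with hC2u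
  set C2v : ℝ := |s / d| * C1v + a ^ 2 / d with hC2v
  set C3u : ℝ := |s| * C2u + (2 * C1u + (1 / a) * C1v) with hC3u
  set C3v : ℝ := |s / d| * C2v + (a * C1v + a * (b * C1u + C1v)) / d with hC3v
  have hC1u0 : 0 < C1u := by rw [hC1u]; positivity
  have hC1v0 : 0 < C1v := by rw [hC1v]; positivity
  have hC2u0 : 0 < C2u := by rw [hC2u]; positivity
  have hC2v0 : 0 ≤ C2v := by rw [hC2v]; positivity
  have hC3u0 : 0 ≤ C3u := by rw [hC3u]; positivity
  have hC3v0 : 0 ≤ C3v := by rw [hC3v]; positivity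
  refine ⟨C1u + C1v + C2u + C2v + C3u + C3v, by linarith, ?_⟩
  intro c hc hca u v hu2 hv2 hodeu hodev hub hvb
  have hud : Differentiable ℝ u := hu2.differentiable two_ne_zero
  have hvd : Differentiable ℝ v := hv2.differentiable two_ne_zero
  have hud' : Differentiable ℝ (deriv u) := contdiff2_deriv hu2
  have hvd' : Differentiable ℝ (deriv v) := contdiff2_deriv hv2
  -- bounds on c * v
  have hcv : ∀ ξ : ℝ, 0 < c * v ξ ∧ c * v ξ < 1 := by
    intro ξ
    obtain ⟨h1, h2⟩ := hvb ξ
    constructor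
    · exact mul_pos hc h1
    · have : c * v ξ < c * a := by nlinarith
      have h3 : c * a < (1 / a) * a := by nlinarith
      have h4 : (1 / a) * a = 1 := by field_simp
      linarith
  -- the nonlinearities
  set hU : ℝ → ℝ := fun ξ => u ξ * (1 - u ξ - c * v ξ) with hhU
  set hV : ℝ → ℝ := fun ξ => v ξ * (a - b * u ξ - v ξ) / d with hhV
  have hUb : ∀ ξ, |hU ξ| ≤ 1 := by
    intro ξ
    obtain ⟨h1, h2⟩ := hub ξ
    obtain ⟨h3, h4⟩ := hcv ξ
    rw [hhU]; simp only []
    rw [abs_mul]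
    have e1 : |u ξ| ≤ 1 := abs_le.mpr ⟨by linarith, h2.le⟩
    have e2 : |1 - u ξ - c * v ξ| ≤ 1 := abs_le.mpr ⟨by linarith, by linarith⟩
    calc |u ξ| * |1 - u ξ - c * v ξ| ≤ 1 * 1 :=
          mul_le_mul e1 e2 (abs_nonneg _) zero_le_one
      _ = 1 := by ring
  have hVb : ∀ ξ, |hV ξ| ≤ a ^ 2 / d := by
    intro ξ
    obtain ⟨h1, h2⟩ := hvb ξ
    obtain ⟨h3, h4⟩ := hub ξ
    rw [hhV]; simp only []
    rw [abs_div, abs_of_pos hd, abs_mul]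
    have e1 : |v ξ| ≤ a := abs_le.mpr ⟨by linarith, h2.le⟩
    have e2 : |a - b * u ξ - v ξ| ≤ a := by
      rw [abs_le]
      constructor
      · nlinarith
      · nlinarith
    gcongr
    calc |v ξ| * |a - b * u ξ - v ξ| ≤ a * a :=
          mul_le_mul e1 e2 (abs_nonneg _) ha.le
      _ = a ^ 2 := (sq a).symm
  have hUcont : Continuous hU := by
    rw [hhU]
    exact hud.continuous.mul
      ((continuous_const.sub hud.continuous).sub (continuous_const.mul hvd.continuous))
  have hVcont : Continuous hV := by
    rw [hhV]
    exact (hvd.continuous.mul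
      ((continuous_const.sub (continuous_const.mul hud.continuous)).sub hvd.continuous)).div_const d
  -- ODEs in normal form
  have hodeu' : ∀ ξ, deriv (deriv u) ξ = s * deriv u ξ - hU ξ := by
    intro ξ; have := hodeu ξ; rw [hhU]; simp only []; linarith
  have hodev' : ∀ ξ, deriv (deriv v) ξ = (s / d) * deriv v ξ - hV ξ := by
    intro ξ; rw [hhV]; simp only []
    have h1 : deriv (deriv v) ξ = (s * deriv v ξ - v ξ * (a - b * u ξ - v ξ)) / d := by
      rw [eq_div_iff hd.ne']; nlinarith [hodev ξ]
    rw [h1]; ring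
  -- first derivative bounds
  have hD1u : ∀ ξ ∈ Set.Icc (-M) M, |deriv u ξ| ≤ C1u := by
    intro ξ hξ
    have := key_deriv_bound s M 1 1 zero_le_one zero_le_one hM u hU hu2 hUcont hodeu' hUb
      (fun ξ => abs_le.mpr ⟨by linarith [(hub ξ).1], (hub ξ).2.le⟩) ξ hξ
    rw [hC1u]; exact this
  have hD1v : ∀ ξ ∈ Set.Icc (-M) M, |deriv v ξ| ≤ C1v := by
    intro ξ hξ
    have := key_deriv_bound (s / d) M (a ^ 2 / d) a (by positivity) ha.le hM v hV hv2 hVcont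
      hodev' hVb (fun ξ => abs_le.mpr ⟨by linarith [(hvb ξ).1], (hvb ξ).2.le⟩) ξ hξ
    rw [hC1v]; exact this
  -- second derivative bounds
  have hD2u : ∀ ξ ∈ Set.Icc (-M) M, |deriv (deriv u) ξ| ≤ C2u := by
    intro ξ hξ
    rw [hodeu' ξ, hC2u]
    calc |s * deriv u ξ - hU ξ| ≤ |s * deriv u ξ| + |hU ξ| := abs_sub _ _
      _ ≤ |s| * C1u + 1 := by
          rw [abs_mul]
          exact add_le_add (mul_le_mul_of_nonneg_left (hD1u ξ hξ) (abs_nonneg s)) (hUb ξ)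
  have hD2v : ∀ ξ ∈ Set.Icc (-M) M, |deriv (deriv v) ξ| ≤ C2v := by
    intro ξ hξ
    rw [hodev' ξ, hC2v]
    calc |(s / d) * deriv v ξ - hV ξ| ≤ |(s / d) * deriv v ξ| + |hV ξ| := abs_sub _ _
      _ ≤ |s / d| * C1v + a ^ 2 / d := by
          rw [abs_mul]
          exact add_le_add (mul_le_mul_of_nonneg_left (hD1v ξ hξ) (abs_nonneg _)) (hVb ξ)
  -- derivatives of nonlinearities
  have hUder : ∀ ξ : ℝ, HasDerivAt hU
      (deriv u ξ * (1 - u ξ - c * v ξ) + u ξ * (0 - deriv u ξ - c * deriv v ξ)) ξ := by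
    intro ξ
    exact (hud ξ).hasDerivAt.mul
      (((hasDerivAt_const ξ (1:ℝ)).sub (hud ξ).hasDerivAt).sub ((hvd ξ).hasDerivAt.const_mul c))
  have hVder : ∀ ξ : ℝ, HasDerivAt hV
      ((deriv v ξ * (a - b * u ξ - v ξ) + v ξ * (0 - b * deriv u ξ - deriv v ξ)) / d) ξ := by
    intro ξ
    exact ((hvd ξ).hasDerivAt.mul
      (((hasDerivAt_const ξ a).sub ((hud ξ).hasDerivAt.const_mul b)).sub
        (hvd ξ).hasDerivAt)).div_const d
  -- function equalities for second derivatives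
  have hDu2eq : deriv (deriv u) = fun ξ => s * deriv u ξ - hU ξ := funext hodeu'
  have hDv2eq : deriv (deriv v) = fun ξ => (s / d) * deriv v ξ - hV ξ := funext hodev'
  -- third derivatives
  have hD3uder : ∀ ξ : ℝ, HasDerivAt (deriv (deriv u))
      (s * deriv (deriv u) ξ -
        (deriv u ξ * (1 - u ξ - c * v ξ) + u ξ * (0 - deriv u ξ - c * deriv v ξ))) ξ := by
    intro ξ
    have h0 := ((hud' ξ).hasDerivAt.const_mul s).sub (hUder ξ)
    exact h0.congr_of_eventuallyEq (Filter.Eventually.of_forall fun y => congrFun hDu2eq y)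
  have hD3vder : ∀ ξ : ℝ, HasDerivAt (deriv (deriv v))
      ((s / d) * deriv (deriv v) ξ -
        (deriv v ξ * (a - b * u ξ - v ξ) + v ξ * (0 - b * deriv u ξ - deriv v ξ)) / d) ξ := by
    intro ξ
    have h0 := ((hvd' ξ).hasDerivAt.const_mul (s / d)).sub (hVder ξ)
    exact h0.congr_of_eventuallyEq (Filter.Eventually.of_forall fun y => congrFun hDv2eq y)
  have hdiff2u : Differentiable ℝ (deriv (deriv u)) := fun ξ => (hD3uder ξ).differentiableAt
  have hdiff2v : Differentiable ℝ (deriv (deriv v)) := fun ξ => (hD3vder ξ).differentiableAt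
  have hit2u : iteratedDeriv 2 u = deriv (deriv u) := by
    simp [iteratedDeriv_succ, iteratedDeriv_one]
  have hit2v : iteratedDeriv 2 v = deriv (deriv v) := by
    simp [iteratedDeriv_succ, iteratedDeriv_one]
  have hit3u : iteratedDeriv 3 u = deriv (deriv (deriv u)) := by
    simp [iteratedDeriv_succ, iteratedDeriv_one]
  have hit3v : iteratedDeriv 3 v = deriv (deriv (deriv v)) := by
    simp [iteratedDeriv_succ, iteratedDeriv_one]
  have hD3u : ∀ ξ ∈ Set.Icc (-M) M, |deriv (deriv (deriv u)) ξ| ≤ C3u := by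
    intro ξ hξ
    rw [(hD3uder ξ).deriv, hC3u]
    have e1 := hD1u ξ hξ
    have e2 := hD2u ξ hξ
    have e3 := hD1v ξ hξ
    obtain ⟨g1, g2⟩ := hub ξ
    obtain ⟨g3, g4⟩ := hcv ξ
    have eu : |u ξ| ≤ 1 := abs_le.mpr ⟨by linarith, g2.le⟩
    have ew : |1 - u ξ - c * v ξ| ≤ 1 := abs_le.mpr ⟨by linarith, by linarith⟩
    have ecv : |c * deriv v ξ| ≤ (1 / a) * C1v := by
      rw [abs_mul, abs_of_pos hc]
      exact mul_le_mul hca.le e3 (abs_nonneg _) (by positivity)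
    calc |s * deriv (deriv u) ξ -
          (deriv u ξ * (1 - u ξ - c * v ξ) + u ξ * (0 - deriv u ξ - c * deriv v ξ))|
        ≤ |s * deriv (deriv u) ξ| +
          |deriv u ξ * (1 - u ξ - c * v ξ) + u ξ * (0 - deriv u ξ - c * deriv v ξ)| := abs_sub _ _
      _ ≤ |s| * C2u + (2 * C1u + (1 / a) * C1v) := by
          apply add_le_add
          · rw [abs_mul]; exact mul_le_mul_of_nonneg_left e2 (abs_nonneg s)
          · calc |deriv u ξ * (1 - u ξ - c * v ξ) + u ξ * (0 - deriv u ξ - c * deriv v ξ)|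
                ≤ |deriv u ξ * (1 - u ξ - c * v ξ)| + |u ξ * (0 - deriv u ξ - c * deriv v ξ)| :=
                  abs_add_le _ _
              _ ≤ C1u * 1 + 1 * (C1u + (1 / a) * C1v) := by
                  apply add_le_add
                  · rw [abs_mul]
                    exact mul_le_mul e1 ew (abs_nonneg _) hC1u0.le
                  · rw [abs_mul]
                    apply mul_le_mul eu ?_ (abs_nonneg _) zero_le_one
                    calc |0 - deriv u ξ - c * deriv v ξ|
                        ≤ |0 - deriv u ξ| + |c * deriv v ξ| := abs_sub _ _
                      _ ≤ C1u + (1 / a) * C1v := by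
                          rw [zero_sub, abs_neg]; exact add_le_add e1 ecv
              _ = 2 * C1u + (1 / a) * C1v := by ring
  have hD3v : ∀ ξ ∈ Set.Icc (-M) M, |deriv (deriv (deriv v)) ξ| ≤ C3v := by
    intro ξ hξ
    rw [(hD3vder ξ).deriv, hC3v]
    have e1 := hD1u ξ hξ
    have e2 := hD2v ξ hξ
    have e3 := hD1v ξ hξ
    obtain ⟨g1, g2⟩ := hvb ξ
    obtain ⟨g3, g4⟩ := hub ξ
    have ev : |v ξ| ≤ a := abs_le.mpr ⟨by linarith, g2.le⟩
    have ew : |a - b * u ξ - v ξ| ≤ a := by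
      rw [abs_le]; constructor <;> nlinarith
    calc |(s / d) * deriv (deriv v) ξ -
          (deriv v ξ * (a - b * u ξ - v ξ) + v ξ * (0 - b * deriv u ξ - deriv v ξ)) / d|
        ≤ |(s / d) * deriv (deriv v) ξ| +
          |(deriv v ξ * (a - b * u ξ - v ξ) + v ξ * (0 - b * deriv u ξ - deriv v ξ)) / d| :=
          abs_sub _ _
      _ ≤ |s / d| * C2v + (a * C1v + a * (b * C1u + C1v)) / d := by
          apply add_le_add
          · rw [abs_mul]; exact mul_le_mul_of_nonneg_left e2 (abs_nonneg _)
          · rw [abs_div, abs_of_pos hd]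
            gcongr
            calc |deriv v ξ * (a - b * u ξ - v ξ) + v ξ * (0 - b * deriv u ξ - deriv v ξ)|
                ≤ |deriv v ξ * (a - b * u ξ - v ξ)| + |v ξ * (0 - b * deriv u ξ - deriv v ξ)| :=
                  abs_add_le _ _
              _ ≤ C1v * a + a * (b * C1u + C1v) := by
                  apply add_le_add
                  · rw [abs_mul]
                    exact mul_le_mul e3 ew (abs_nonneg _) hC1v0.le
                  · rw [abs_mul]
                    apply mul_le_mul ev ?_ (abs_nonneg _) ha.le
                    calc |0 - b * deriv u ξ - deriv v ξ|
                        ≤ |0 - b * deriv u ξ| + |deriv v ξ| := abs_sub _ _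
                      _ ≤ b * C1u + C1v := by
                          rw [zero_sub, abs_neg, abs_mul, abs_of_pos hb]
                          exact add_le_add (mul_le_mul_of_nonneg_left e1 hb.le) e3
              _ = a * C1v + a * (b * C1u + C1v) := by ring
  refine ⟨⟨by rw [hit2u]; exact hdiff2u, by rw [hit2v]; exact hdiff2v⟩, ?_⟩
  intro ξ hξ k hk
  have hC1ub : C1u ≤ C1u + C1v + C2u + C2v + C3u + C3v := by linarith
  have b1u : C1u ≤ C1u + C1v + C2u + C2v + C3u + C3v := by linarith
  have b1v : C1v ≤ C1u + C1v + C2u + C2v + C3u + C3v := by linarith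
  have b2u : C2u ≤ C1u + C1v + C2u + C2v + C3u + C3v := by linarith
  have b2v : C2v ≤ C1u + C1v + C2u + C2v + C3u + C3v := by linarith
  have b3u : C3u ≤ C1u + C1v + C2u + C2v + C3u + C3v := by linarith
  have b3v : C3v ≤ C1u + C1v + C2u + C2v + C3u + C3v := by linarith
  fin_cases hk
  · simp only [iteratedDeriv_one]
    exact ⟨(hD1u ξ hξ).trans b1u, (hD1v ξ hξ).trans b1v⟩
  · rw [hit2u, hit2v]
    exact ⟨(hD2u ξ hξ).trans b2u, (hD2v ξ hξ).trans b2v⟩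
  · rw [hit3u, hit3v]
    exact ⟨(hD3u ξ hξ).trans b3u, (hD3v ξ hξ).trans b3v⟩
end

section
/- Fix d > 0, s ∈ ℝ, a, c > 0 with a < 1/c, and M > 0. Then there exists a constant C > 0, depending only on M, s, d, a, c (and in particular independent of b), such that for every b with 0 < b < a and every pair (u, v) of twice continuously differentiable functions solving u'' − s·u' + u·(1 − u − c·v) = 0 and d·v'' − s·v' + v·(a − b·u − v) = 0 on ℝ with 0 < u(ξ) < 1 and 0 < v(ξ) < a for all ξ ∈ ℝ, the functions u and v are three times differentiable on ℝ and for every ξ ∈ [−M, M] and every k ∈ {1, 2, 3} one has |u^{(k)}(ξ)| ≤ C and |v^{(k)}(ξ)| ≤ C. -/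
open Filter Real Set
set_option maxHeartbeats 1000000

lemma aux_bound (f : ℝ → ℝ) (hf : Differentiable ℝ f)
    (p K B T : ℝ) (hK : 0 ≤ K)
    (hb : ∀ t ∈ Set.Icc (-T) T, |deriv f t - p * f t| ≤ K)
    (ξ η : ℝ) (hξ : ξ ∈ Set.Icc (-T) T) (hη : η ∈ Set.Icc (-T) T)
    (hdist : |ξ - η| ≤ 2) (hfη : |f η| ≤ B) :
    |f ξ| ≤ exp (2 * |p| * T) * (B + 2 * K) := by
  have hT : 0 ≤ T := by
    rcases hξ with ⟨h1, h2⟩; linarith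
  set F : ℝ → ℝ := fun t => exp (-p * t) * f t with hF
  have hF' : ∀ t, HasDerivAt F (exp (-p * t) * (deriv f t - p * f t)) t := by
    intro t
    have h1 : HasDerivAt (fun t : ℝ => exp (-p * t)) (exp (-p * t) * (-p)) t := by
      simpa using (((hasDerivAt_id t).const_mul (-p)).exp)
    have h2 := (hf t).hasDerivAt
    have := h1.mul h2
    exact this.congr_deriv (by ring)
  have hexp : ∀ t ∈ Set.Icc (-T) T, exp (-p * t) ≤ exp (|p| * T) := by
    intro t ht
    apply exp_le_exp.mpr
    have h1 : -p * t ≤ |p| * |t| := by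
      calc -p * t ≤ |(-p) * t| := le_abs_self _
      _ = |p| * |t| := by rw [abs_mul, abs_neg]
    have h2 : |t| ≤ T := abs_le.mpr ⟨ht.1, ht.2⟩
    nlinarith [abs_nonneg p]
  have key : |F ξ - F η| ≤ (exp (|p| * T) * K) * |ξ - η| := by
    have := Convex.norm_image_sub_le_of_norm_hasDerivWithin_le
      (f := F) (f' := fun t => exp (-p * t) * (deriv f t - p * f t))
      (s := Set.Icc (-T) T) (C := exp (|p| * T) * K)
      (fun x hx => (hF' x).hasDerivWithinAt)
      (fun x hx => by
        rw [Real.norm_eq_abs, abs_mul, abs_exp]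
        exact mul_le_mul (hexp x hx) (hb x hx) (abs_nonneg _) (exp_nonneg _))
      (convex_Icc _ _) hη hξ
    simpa [Real.norm_eq_abs] using this
  have hFη : |F η| ≤ exp (|p| * T) * B := by
    rw [hF]
    simp only [abs_mul, abs_exp]
    have hB : 0 ≤ B := le_trans (abs_nonneg _) hfη
    exact mul_le_mul (hexp η hη) hfη (abs_nonneg _) (exp_nonneg _)
  have hFξ : |F ξ| ≤ exp (|p| * T) * (B + 2 * K) := by
    have : |F ξ| ≤ |F η| + (exp (|p| * T) * K) * |ξ - η| := by
      have := abs_sub_abs_le_abs_sub (F ξ) (F η)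
      linarith [key]
    have h2 : (exp (|p| * T) * K) * |ξ - η| ≤ exp (|p| * T) * K * 2 :=
      mul_le_mul_of_nonneg_left hdist (by positivity)
    calc |F ξ| ≤ exp (|p| * T) * B + exp (|p| * T) * K * 2 := by linarith
    _ = exp (|p| * T) * (B + 2 * K) := by ring
  have hfeq : f ξ = exp (p * ξ) * F ξ := by
    rw [hF]; simp only []
    rw [← mul_assoc, ← exp_add]
    simp
  rw [hfeq, abs_mul, abs_exp]
  have h3 : exp (p * ξ) ≤ exp (|p| * T) := by
    apply exp_le_exp.mpr
    have h2 : |ξ| ≤ T := abs_le.mpr ⟨hξ.1, hξ.2⟩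
    nlinarith [le_abs_self p, abs_nonneg p, abs_mul_abs_self p, le_abs_self (p*ξ), (abs_mul p ξ).symm]
  calc exp (p * ξ) * |F ξ| ≤ exp (|p| * T) * (exp (|p| * T) * (B + 2 * K)) := by
        have hB2 : 0 ≤ B + 2 * K := by
          have hB : 0 ≤ B := le_trans (abs_nonneg _) hfη
          linarith
        exact mul_le_mul h3 hFξ (abs_nonneg _) (exp_nonneg _)
  _ = exp (2 * |p| * T) * (B + 2 * K) := by
        rw [← mul_assoc, ← exp_add]; ring_nf

/-- Interior derivative estimates, uniform in `b`: on any compact interval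
`[-M, M]`, the first three derivatives of a bounded positive solution of the
traveling-wave system are bounded by a constant depending only on
`M, s, d, a, c` (and not on `b ∈ (0, a)`). -/
theorem interior_estimate_uniform_in_b
    (d s a c M : ℝ) (hd : 0 < d) (ha : 0 < a) (hc : 0 < c) (hac : a < 1 / c)
    (hM : 0 < M) :
    ∃ C : ℝ, 0 < C ∧
      ∀ b : ℝ, 0 < b → b < a →
        ∀ u v : ℝ → ℝ, ContDiff ℝ 2 u → ContDiff ℝ 2 v →
          (∀ ξ : ℝ, deriv (deriv u) ξ - s * deriv u ξ + u ξ * (1 - u ξ - c * v ξ) = 0) →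
          (∀ ξ : ℝ, d * deriv (deriv v) ξ - s * deriv v ξ + v ξ * (a - b * u ξ - v ξ) = 0) →
          (∀ ξ : ℝ, 0 < u ξ ∧ u ξ < 1) → (∀ ξ : ℝ, 0 < v ξ ∧ v ξ < a) →
          (Differentiable ℝ (iteratedDeriv 2 u) ∧ Differentiable ℝ (iteratedDeriv 2 v)) ∧
          ∀ ξ ∈ Set.Icc (-M) M, ∀ k ∈ ({1, 2, 3} : Finset ℕ),
            |iteratedDeriv k u ξ| ≤ C ∧ |iteratedDeriv k v ξ| ≤ C := by
  obtain ⟨T, hT⟩ : ∃ T : ℝ, T = M + 1 := ⟨_, rfl⟩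
  have hT0 : 0 < T := by rw [hT]; linarith
  obtain ⟨K₁, hK₁⟩ : ∃ x : ℝ, x = 2 + c * a := ⟨_, rfl⟩
  obtain ⟨K₂, hK₂⟩ : ∃ x : ℝ, x = 3 * a * a / d := ⟨_, rfl⟩
  have hK₁0 : 0 < K₁ := by rw [hK₁]; positivity
  have hK₂0 : 0 < K₂ := by rw [hK₂]; positivity
  obtain ⟨C1u, hC1u⟩ : ∃ x : ℝ, x = exp (2 * |s| * T) * (1 + 2 * K₁) := ⟨_, rfl⟩
  obtain ⟨C1v, hC1v⟩ : ∃ x : ℝ, x = exp (2 * |s / d| * T) * (a + 2 * K₂) := ⟨_, rfl⟩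
  have hC1u0 : 0 < C1u := by rw [hC1u]; positivity
  have hC1v0 : 0 < C1v := by rw [hC1v]; positivity
  obtain ⟨C2u, hC2u⟩ : ∃ x : ℝ, x = |s| * C1u + K₁ := ⟨_, rfl⟩
  obtain ⟨C2v, hC2v⟩ : ∃ x : ℝ, x = (|s| * C1v + 3 * a * a) / d := ⟨_, rfl⟩
  have hC2u0 : 0 < C2u := by rw [hC2u]; positivity
  have hC2v0 : 0 < C2v := by rw [hC2v]; positivity
  obtain ⟨C3u, hC3u⟩ : ∃ x : ℝ, x = |s| * C2u + C1u * (2 + c * a) + (C1u + c * C1v) := ⟨_, rfl⟩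
  obtain ⟨C3v, hC3v⟩ : ∃ x : ℝ, x = (|s| * C2v + 3 * a * C1v + a * (a * C1u + C1v)) / d := ⟨_, rfl⟩
  have hC3u0 : 0 < C3u := by rw [hC3u]; positivity
  have hC3v0 : 0 < C3v := by rw [hC3v]; positivity
  refine ⟨1 + C1u + C1v + C2u + C2v + C3u + C3v, by positivity, ?_⟩
  intro b hb0 hba u v hu hv hequ heqv hupos hvpos
  -- basic differentiability
  have hu1 : Differentiable ℝ u := hu.differentiable (by norm_num)
  have hv1 : Differentiable ℝ v := hv.differentiable (by norm_num)
  have hu2 : ContDiff ℝ 1 (deriv u) :=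
    (contDiff_succ_iff_deriv.mp (show ContDiff ℝ (1 + 1) u by norm_num; exact hu)).2.2
  have hv2 : ContDiff ℝ 1 (deriv v) :=
    (contDiff_succ_iff_deriv.mp (show ContDiff ℝ (1 + 1) v by norm_num; exact hv)).2.2
  have hu2' : Differentiable ℝ (deriv u) := hu2.differentiable (by norm_num)
  have hv2' : Differentiable ℝ (deriv v) := hv2.differentiable (by norm_num)
  -- rewritten equations
  have hequ' : ∀ ξ : ℝ, deriv (deriv u) ξ = s * deriv u ξ - u ξ * (1 - u ξ - c * v ξ) := by
    intro ξ; have := hequ ξ; linarith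
  have heqv' : ∀ ξ : ℝ, deriv (deriv v) ξ =
      (s * deriv v ξ - v ξ * (a - b * u ξ - v ξ)) / d := by
    intro ξ; have := heqv ξ; field_simp; linarith
  -- pointwise bounds on nonlinearities
  have hubd : ∀ ξ : ℝ, |u ξ| ≤ 1 := fun ξ =>
    abs_le.mpr ⟨by linarith [(hupos ξ).1], (hupos ξ).2.le⟩
  have hvbd : ∀ ξ : ℝ, |v ξ| ≤ a := fun ξ =>
    abs_le.mpr ⟨by linarith [(hvpos ξ).1], (hvpos ξ).2.le⟩
  have hgu : ∀ ξ : ℝ, |1 - u ξ - c * v ξ| ≤ 2 + c * a := by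
    intro ξ
    have h1 := (hupos ξ).1; have h2 := (hupos ξ).2
    have h3 := (hvpos ξ).1; have h4 := (hvpos ξ).2
    rw [abs_le]; constructor <;> nlinarith
  have hgv : ∀ ξ : ℝ, |a - b * u ξ - v ξ| ≤ 3 * a := by
    intro ξ
    have h1 := (hupos ξ).1; have h2 := (hupos ξ).2
    have h3 := (hvpos ξ).1; have h4 := (hvpos ξ).2
    rw [abs_le]; constructor <;> nlinarith
  have hru : ∀ ξ : ℝ, |u ξ * (1 - u ξ - c * v ξ)| ≤ K₁ := by
    intro ξ
    rw [abs_mul]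
    calc |u ξ| * |1 - u ξ - c * v ξ| ≤ 1 * (2 + c * a) :=
          mul_le_mul (hubd ξ) (hgu ξ) (abs_nonneg _) zero_le_one
    _ = K₁ := by rw [hK₁]; ring
  have hrv : ∀ ξ : ℝ, |v ξ * (a - b * u ξ - v ξ) / d| ≤ K₂ := by
    intro ξ
    rw [abs_div, abs_mul, abs_of_pos hd, hK₂]
    apply (div_le_div_iff_of_pos_right hd).mpr
    calc |v ξ| * |a - b * u ξ - v ξ| ≤ a * (3 * a) :=
          mul_le_mul (hvbd ξ) (hgv ξ) (abs_nonneg _) ha.le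
    _ = 3 * a * a := by ring
  -- first derivative bounds
  have hd1u : ∀ ξ ∈ Set.Icc (-M) M, |deriv u ξ| ≤ C1u := by
    intro ξ hξ
    obtain ⟨η, hη, hηe⟩ := exists_deriv_eq_slope u (show ξ - 1 < ξ + 1 by linarith)
      hu1.continuous.continuousOn (fun x _ => (hu1 x).differentiableWithinAt)
    have hηmem : η ∈ Set.Icc (-T) T := by
      rw [hT]
      constructor <;> [simp; skip] <;> [linarith [hη.1, hξ.1]; linarith [hη.2, hξ.2]]
    have hB : |deriv u η| ≤ 1 := by
      rw [hηe, show ξ + 1 - (ξ - 1) = (2:ℝ) from by ring, abs_div, abs_two,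
        div_le_one (by norm_num : (0:ℝ) < 2), abs_le]
      have h1 := (hupos (ξ + 1)).1; have h2 := (hupos (ξ + 1)).2
      have h3 := (hupos (ξ - 1)).1; have h4 := (hupos (ξ - 1)).2
      constructor <;> linarith
    have := aux_bound (deriv u) hu2' s K₁ 1 T hK₁0.le
      (fun t _ => by rw [hequ' t]; simpa using hru t)
      ξ η ⟨by rw [hT]; linarith [hξ.1], by rw [hT]; linarith [hξ.2]⟩ hηmem
      (by rw [abs_le]; constructor <;> linarith [hη.1, hη.2]) hB
    rw [hC1u]; exact this
  have hd1v : ∀ ξ ∈ Set.Icc (-M) M, |deriv v ξ| ≤ C1v := by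
    intro ξ hξ
    obtain ⟨η, hη, hηe⟩ := exists_deriv_eq_slope v (show ξ - 1 < ξ + 1 by linarith)
      hv1.continuous.continuousOn (fun x _ => (hv1 x).differentiableWithinAt)
    have hηmem : η ∈ Set.Icc (-T) T := by
      rw [hT]
      constructor <;> [simp; skip] <;> [linarith [hη.1, hξ.1]; linarith [hη.2, hξ.2]]
    have hB : |deriv v η| ≤ a := by
      rw [hηe, show ξ + 1 - (ξ - 1) = (2:ℝ) from by ring, abs_div, abs_two,
        div_le_iff₀ (by norm_num : (0:ℝ) < 2), abs_le]
      have h1 := (hvpos (ξ + 1)).1; have h2 := (hvpos (ξ + 1)).2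
      have h3 := (hvpos (ξ - 1)).1; have h4 := (hvpos (ξ - 1)).2
      constructor <;> linarith
    have := aux_bound (deriv v) hv2' (s / d) K₂ a T hK₂0.le
      (fun t _ => by
        rw [heqv' t]
        have : (s * deriv v t - v t * (a - b * u t - v t)) / d - s / d * deriv v t
            = -(v t * (a - b * u t - v t) / d) := by field_simp; ring
        rw [this, abs_neg]; exact hrv t)
      ξ η ⟨by rw [hT]; linarith [hξ.1], by rw [hT]; linarith [hξ.2]⟩ hηmem
      (by rw [abs_le]; constructor <;> linarith [hη.1, hη.2]) hB
    rw [hC1v]; exact this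
  -- second derivative bounds
  have hd2u : ∀ ξ ∈ Set.Icc (-M) M, |deriv (deriv u) ξ| ≤ C2u := by
    intro ξ hξ
    rw [hequ' ξ]
    calc |s * deriv u ξ - u ξ * (1 - u ξ - c * v ξ)|
        ≤ |s * deriv u ξ| + |u ξ * (1 - u ξ - c * v ξ)| := abs_sub _ _
    _ ≤ |s| * C1u + K₁ := by
        rw [abs_mul]
        exact add_le_add (mul_le_mul_of_nonneg_left (hd1u ξ hξ) (abs_nonneg s)) (hru ξ)
    _ = C2u := hC2u.symm
  have hd2v : ∀ ξ ∈ Set.Icc (-M) M, |deriv (deriv v) ξ| ≤ C2v := by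
    intro ξ hξ
    rw [heqv' ξ, hC2v, abs_div, abs_of_pos hd]
    apply (div_le_div_iff_of_pos_right hd).mpr
    calc |s * deriv v ξ - v ξ * (a - b * u ξ - v ξ)|
        ≤ |s * deriv v ξ| + |v ξ * (a - b * u ξ - v ξ)| := abs_sub _ _
    _ ≤ |s| * C1v + 3 * a * a := by
        rw [abs_mul, abs_mul]
        refine add_le_add (mul_le_mul_of_nonneg_left (hd1v ξ hξ) (abs_nonneg s)) ?_
        calc |v ξ| * |a - b * u ξ - v ξ| ≤ a * (3 * a) :=
              mul_le_mul (hvbd ξ) (hgv ξ) (abs_nonneg _) ha.le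
        _ = 3 * a * a := by ring
  -- third derivatives via differentiating the equations
  have hgueq : deriv (deriv u) = fun t => s * deriv u t - u t * (1 - u t - c * v t) :=
    funext fun t => hequ' t
  have hgveq : deriv (deriv v) = fun t => (s * deriv v t - v t * (a - b * u t - v t)) / d :=
    funext fun t => heqv' t
  have hguD : ∀ ξ : ℝ, HasDerivAt (fun t => s * deriv u t - u t * (1 - u t - c * v t))
      (s * deriv (deriv u) ξ - (deriv u ξ * (1 - u ξ - c * v ξ)
        + u ξ * (-(deriv u ξ) - c * deriv v ξ))) ξ := by
    intro ξ
    have h1 : HasDerivAt (deriv u) (deriv (deriv u) ξ) ξ := (hu2' ξ).hasDerivAt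
    have h2 : HasDerivAt u (deriv u ξ) ξ := (hu1 ξ).hasDerivAt
    have h3 : HasDerivAt v (deriv v ξ) ξ := (hv1 ξ).hasDerivAt
    have h4 : HasDerivAt (fun t => 1 - u t - c * v t) (-(deriv u ξ) - c * deriv v ξ) ξ := by
      exact (((hasDerivAt_const ξ (1:ℝ)).sub h2).sub (h3.const_mul c)).congr_deriv (by ring)
    exact (h1.const_mul s).sub (h2.mul h4)
  have hgvD : ∀ ξ : ℝ, HasDerivAt (fun t => (s * deriv v t - v t * (a - b * u t - v t)) / d)
      ((s * deriv (deriv v) ξ - (deriv v ξ * (a - b * u ξ - v ξ)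
        + v ξ * (-(b * deriv u ξ) - deriv v ξ))) / d) ξ := by
    intro ξ
    have h1 : HasDerivAt (deriv v) (deriv (deriv v) ξ) ξ := (hv2' ξ).hasDerivAt
    have h2 : HasDerivAt u (deriv u ξ) ξ := (hu1 ξ).hasDerivAt
    have h3 : HasDerivAt v (deriv v ξ) ξ := (hv1 ξ).hasDerivAt
    have h4 : HasDerivAt (fun t => a - b * u t - v t) (-(b * deriv u ξ) - deriv v ξ) ξ := by
      exact (((hasDerivAt_const ξ a).sub (h2.const_mul b)).sub h3).congr_deriv (by ring)
    exact ((h1.const_mul s).sub (h3.mul h4)).div_const d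
  have hdiff2u : Differentiable ℝ (deriv (deriv u)) := by
    rw [hgueq]; intro ξ; exact (hguD ξ).differentiableAt
  have hdiff2v : Differentiable ℝ (deriv (deriv v)) := by
    rw [hgveq]; intro ξ; exact (hgvD ξ).differentiableAt
  have hid2u : iteratedDeriv 2 u = deriv (deriv u) := by
    rw [show (2:ℕ) = 1 + 1 from rfl, iteratedDeriv_succ, iteratedDeriv_one]
  have hid2v : iteratedDeriv 2 v = deriv (deriv v) := by
    rw [show (2:ℕ) = 1 + 1 from rfl, iteratedDeriv_succ, iteratedDeriv_one]
  have hd3u : ∀ ξ ∈ Set.Icc (-M) M, |deriv (deriv (deriv u)) ξ| ≤ C3u := by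
    intro ξ hξ
    have hde : deriv (deriv (deriv u)) ξ = s * deriv (deriv u) ξ -
        (deriv u ξ * (1 - u ξ - c * v ξ) + u ξ * (-(deriv u ξ) - c * deriv v ξ)) := by
      conv_lhs => rw [hgueq]
      exact (hguD ξ).deriv
    rw [hde]
    have e1 : |s * deriv (deriv u) ξ| ≤ |s| * C2u := by
      rw [abs_mul]; exact mul_le_mul_of_nonneg_left (hd2u ξ hξ) (abs_nonneg s)
    have e2 : |deriv u ξ * (1 - u ξ - c * v ξ)| ≤ C1u * (2 + c * a) := by
      rw [abs_mul]
      exact mul_le_mul (hd1u ξ hξ) (hgu ξ) (abs_nonneg _) hC1u0.le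
    have e3 : |u ξ * (-(deriv u ξ) - c * deriv v ξ)| ≤ C1u + c * C1v := by
      rw [abs_mul]
      calc |u ξ| * |-(deriv u ξ) - c * deriv v ξ| ≤ 1 * (C1u + c * C1v) := by
            refine mul_le_mul (hubd ξ) ?_ (abs_nonneg _) zero_le_one
            calc |-(deriv u ξ) - c * deriv v ξ| ≤ |deriv u ξ| + |c * deriv v ξ| := by
                  rw [← abs_neg (deriv u ξ)]; exact abs_sub _ _
            _ ≤ C1u + c * C1v := by
                rw [abs_mul, abs_of_pos hc]
                exact add_le_add (hd1u ξ hξ) (mul_le_mul_of_nonneg_left (hd1v ξ hξ) hc.le)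
      _ = C1u + c * C1v := one_mul _
    calc |s * deriv (deriv u) ξ - (deriv u ξ * (1 - u ξ - c * v ξ)
            + u ξ * (-(deriv u ξ) - c * deriv v ξ))|
        ≤ |s * deriv (deriv u) ξ| + |deriv u ξ * (1 - u ξ - c * v ξ)
            + u ξ * (-(deriv u ξ) - c * deriv v ξ)| := abs_sub _ _
    _ ≤ |s * deriv (deriv u) ξ| + (|deriv u ξ * (1 - u ξ - c * v ξ)|
            + |u ξ * (-(deriv u ξ) - c * deriv v ξ)|) := by
          gcongr; exact abs_add_le _ _
    _ ≤ C3u := by rw [hC3u]; linarith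
  have hd3v : ∀ ξ ∈ Set.Icc (-M) M, |deriv (deriv (deriv v)) ξ| ≤ C3v := by
    intro ξ hξ
    have hde : deriv (deriv (deriv v)) ξ = (s * deriv (deriv v) ξ -
        (deriv v ξ * (a - b * u ξ - v ξ) + v ξ * (-(b * deriv u ξ) - deriv v ξ))) / d := by
      conv_lhs => rw [hgveq]
      exact (hgvD ξ).deriv
    rw [hde, hC3v, abs_div, abs_of_pos hd]
    apply (div_le_div_iff_of_pos_right hd).mpr
    have e1 : |s * deriv (deriv v) ξ| ≤ |s| * C2v := by
      rw [abs_mul]; exact mul_le_mul_of_nonneg_left (hd2v ξ hξ) (abs_nonneg s)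
    have e2 : |deriv v ξ * (a - b * u ξ - v ξ)| ≤ 3 * a * C1v := by
      rw [abs_mul]
      exact (mul_le_mul (hd1v ξ hξ) (hgv ξ) (abs_nonneg _) hC1v0.le).trans_eq (by ring)
    have e3 : |v ξ * (-(b * deriv u ξ) - deriv v ξ)| ≤ a * (a * C1u + C1v) := by
      rw [abs_mul]
      refine mul_le_mul (hvbd ξ) ?_ (abs_nonneg _) ha.le
      calc |-(b * deriv u ξ) - deriv v ξ| ≤ |b * deriv u ξ| + |deriv v ξ| := by
            rw [← abs_neg (b * deriv u ξ)]; exact abs_sub _ _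
      _ ≤ a * C1u + C1v := by
          refine add_le_add ?_ (hd1v ξ hξ)
          rw [abs_mul, abs_of_pos hb0]
          exact mul_le_mul hba.le (hd1u ξ hξ) (abs_nonneg _) ha.le
    calc |s * deriv (deriv v) ξ - (deriv v ξ * (a - b * u ξ - v ξ)
            + v ξ * (-(b * deriv u ξ) - deriv v ξ))|
        ≤ |s * deriv (deriv v) ξ| + |deriv v ξ * (a - b * u ξ - v ξ)
            + v ξ * (-(b * deriv u ξ) - deriv v ξ)| := abs_sub _ _
    _ ≤ |s * deriv (deriv v) ξ| + (|deriv v ξ * (a - b * u ξ - v ξ)|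
            + |v ξ * (-(b * deriv u ξ) - deriv v ξ)|) := by
          gcongr; exact abs_add_le _ _
    _ ≤ |s| * C2v + 3 * a * C1v + a * (a * C1u + C1v) := by linarith
  refine ⟨⟨by rw [hid2u]; exact hdiff2u, by rw [hid2v]; exact hdiff2v⟩, ?_⟩
  intro ξ hξ k hk
  have hCb : ∀ X : ℝ, X = C1u ∨ X = C1v ∨ X = C2u ∨ X = C2v ∨ X = C3u ∨ X = C3v →
      X ≤ 1 + C1u + C1v + C2u + C2v + C3u + C3v := by
    rintro X (rfl | rfl | rfl | rfl | rfl | rfl) <;> linarith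
  fin_cases hk
  · rw [iteratedDeriv_one, iteratedDeriv_one]
    exact ⟨(hd1u ξ hξ).trans (hCb _ (Or.inl rfl)),
      (hd1v ξ hξ).trans (hCb _ (Or.inr (Or.inl rfl)))⟩
  · rw [hid2u, hid2v]
    exact ⟨(hd2u ξ hξ).trans (hCb _ (Or.inr (Or.inr (Or.inl rfl)))),
      (hd2v ξ hξ).trans (hCb _ (Or.inr (Or.inr (Or.inr (Or.inl rfl)))))⟩
  · constructor
    · rw [show (3:ℕ) = 2 + 1 from rfl, iteratedDeriv_succ, hid2u]
      exact (hd3u ξ hξ).trans (hCb _ (Or.inr (Or.inr (Or.inr (Or.inr (Or.inl rfl))))))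
    · rw [show (3:ℕ) = 2 + 1 from rfl, iteratedDeriv_succ, hid2v]
      exact (hd3v ξ hξ).trans (hCb _ (Or.inr (Or.inr (Or.inr (Or.inr (Or.inr rfl))))))
end
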